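/- arXiv:2509.17139 — 10 statements merged into one kernel-verified Lean document; each statement's English description precedes it below -/
import Mathlib

section
/- Let R ⊆ k[[t]] be a k-subalgebra with maximal ideal 𝔪 = R ∩ t·k[[t]] such that t^c·k[[t]] ⊆ R for some c ≥ 1. Then the set S = v(𝔪) \ v(𝔪²) is finite; more precisely, every element of S is strictly less than min{v(x) : x ∈ 𝔪², x ≠ 0} + c. -/
open PowerSeries

/-- The maximal ideal `𝔪 = R ∩ t·k[[t]]` of a subalgebra `R ⊆ k[[t]]`, i.e. the
elements of `R` with zero constant coefficient (equivalently, positive order). -/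
noncomputable def mIdeal {k : Type*} [Field k] (R : Subalgebra k (PowerSeries k)) : Ideal R :=
  RingHom.ker ((constantCoeff : PowerSeries k →+* k).comp R.subtype)

/-- The set of valuations `v(I)` of the nonzero elements of an ideal `I ⊆ R ⊆ k[[t]]`.
(Note `f.order = n` with `n : ℕ` forces `f ≠ 0`, since the zero series has order `⊤`.) -/
def vset {k : Type*} [Field k] {R : Subalgebra k (PowerSeries k)} (I : Ideal R) : Set ℕ :=
  {n | ∃ f ∈ I, (f : PowerSeries k).order = (n : ℕ∞)}

/-- Key Herzog–Kunz step: if `s ∈ v(𝔪)` and `x ∈ 𝔪²` is nonzero with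
`v(x) + c ≤ s`, then `s ∈ v(𝔪²)`. -/
theorem herzogKunz_key {k : Type*} [Field k]
    (R : Subalgebra k (PowerSeries k)) (c : ℕ)
    (hcond : ∀ f : PowerSeries k, (X : PowerSeries k) ^ c * f ∈ R)
    {s : ℕ} (hs : s ∈ vset (mIdeal R))
    {x : R} (hx2 : x ∈ (mIdeal R) ^ 2) (hxne : (x : PowerSeries k) ≠ 0)
    (hle : (x : PowerSeries k).order + (c : ℕ∞) ≤ (s : ℕ∞)) :
    s ∈ vset ((mIdeal R) ^ 2) := by
  obtain ⟨f, hfm, hford⟩ := hs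
  set m := (x : PowerSeries k).order.lift (order_finite_iff_ne_zero.mpr hxne) with hm
  have hxm : (x : PowerSeries k).order = (m : ℕ∞) := by
    simp [hm]
  rw [hxm] at hle
  have hmc : m + c ≤ s := by exact_mod_cast hle
  -- X^(m+c) divides f
  have hdvd : (X : PowerSeries k) ^ (m + c) ∣ (f : PowerSeries k) := by
    rw [X_pow_dvd_iff]
    intro i hi
    apply coeff_of_lt_order
    rw [hford]
    exact_mod_cast lt_of_lt_of_le hi hmc
  obtain ⟨g, hg⟩ := hdvd
  set D := divXPowOrder (x : PowerSeries k) with hD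
  set r : R := ⟨X ^ c * (Inv_divided_by_X_pow_order hxne * g),
    hcond _⟩ with hr
  have hrcoe : (r : PowerSeries k) = X ^ c * (Inv_divided_by_X_pow_order hxne * g) := rfl
  have hx : (x : PowerSeries k) = X ^ m * D :=
    (X_pow_order_mul_divXPowOrder).symm.trans (by rw [hxm, ENat.toNat_coe])
  have hDI : D * Inv_divided_by_X_pow_order hxne = 1 :=
    Inv_divided_by_X_pow_order_rightInv hxne
  have e1 : (x : PowerSeries k) * (r : PowerSeries k)
      = (X ^ m * D) * (X ^ c * (Inv_divided_by_X_pow_order hxne * g)) :=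
    congrArg₂ (· * ·) hx hrcoe
  have e2 : (X ^ m * D) * ((X : PowerSeries k) ^ c * (Inv_divided_by_X_pow_order hxne * g))
      = X ^ (m + c) * g * (D * Inv_divided_by_X_pow_order hxne) := by ring
  have hprod : (x : PowerSeries k) * (r : PowerSeries k) = X ^ (m + c) * g := by
    rw [e1, e2, hDI, mul_one]
  have hfx : (f : PowerSeries k) = (x : PowerSeries k) * (r : PowerSeries k) :=
    hg.trans hprod.symm
  have hfr : f = x * r := by
    apply Subtype.ext
    push_cast
    exact hfx
  refine ⟨f, ?_, hford⟩
  rw [hfr]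
  exact Ideal.mul_mem_right r _ hx2

/-- the set `S = v(𝔪) \ v(𝔪²)` is finite; more precisely every element of `S`
is strictly smaller than `min v(𝔪²) + c` (expressed as: `s < v(x) + c` for every nonzero
`x ∈ 𝔪²`). -/
theorem herzogKunz_set_finite {k : Type*} [Field k]
    (R : Subalgebra k (PowerSeries k)) (c : ℕ) (hc1 : 1 ≤ c)
    (hcond : ∀ f : PowerSeries k, (X : PowerSeries k) ^ c * f ∈ R) :
    (vset (mIdeal R) \ vset ((mIdeal R) ^ 2)).Finite ∧
    (∀ s ∈ vset (mIdeal R) \ vset ((mIdeal R) ^ 2),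
      ∀ x ∈ (mIdeal R) ^ 2, (x : PowerSeries k) ≠ 0 →
        (s : ℕ∞) < (x : PowerSeries k).order + (c : ℕ∞)) := by
  have main : ∀ s ∈ vset (mIdeal R) \ vset ((mIdeal R) ^ 2),
      ∀ x ∈ (mIdeal R) ^ 2, (x : PowerSeries k) ≠ 0 →
        (s : ℕ∞) < (x : PowerSeries k).order + (c : ℕ∞) := by
    intro s hs x hx2 hxne
    by_contra hlt
    push_neg at hlt
    exact hs.2 (herzogKunz_key R c hcond hs.1 hx2 hxne hlt)
  refine ⟨?_, main⟩
  -- produce a nonzero element of 𝔪² : (X^c)^2, of order 2c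
  set x0 : R := ⟨X ^ c * 1, hcond 1⟩ with hx0
  have hx0m : x0 ∈ mIdeal R := by
    have h0 : (constantCoeff : PowerSeries k →+* k) ((x0 : PowerSeries k)) = 0 := by
      simp [hx0, constantCoeff_X, zero_pow (show c ≠ 0 by omega)]
    simpa [mIdeal, RingHom.mem_ker] using h0
  have hx02 : x0 ^ 2 ∈ (mIdeal R) ^ 2 := Ideal.pow_mem_pow hx0m 2
  have hcoe : ((x0 ^ 2 : R) : PowerSeries k) = X ^ (2 * c) := by
    push_cast [hx0]
    ring
  have hne : ((x0 ^ 2 : R) : PowerSeries k) ≠ 0 := by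
    rw [hcoe]
    exact pow_ne_zero _ X_ne_zero
  have hord : ((x0 ^ 2 : R) : PowerSeries k).order = ((2 * c : ℕ) : ℕ∞) := by
    rw [hcoe, order_X_pow]
  apply Set.Finite.subset (Set.finite_Iio (2 * c + c))
  intro s hs
  have := main s hs _ hx02 hne
  rw [hord] at this
  have : (s : ℕ∞) < ((2 * c + c : ℕ) : ℕ∞) := by
    push_cast
    push_cast at this
    exact this
  exact_mod_cast this
end

section
/- Let R ⊆ k[[t]] be a k-subalgebra with 𝔪 = R ∩ t·k[[t]], t^c·k[[t]] ⊆ R, and S = v(𝔪)\v(𝔪²) = {b₁ < … < b_t}. If x₁,…,x_t ∈ 𝔪 satisfy v(xᵢ) = bᵢ, then the images of x₁,…,x_t in 𝔪/𝔪² are linearly independent over k = R/𝔪. -/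
set_option synthInstance.maxHeartbeats 400000

open PowerSeries

/-- with `S = v(𝔪)\v(𝔪²) = {b₁ < … < b_t}` and `xᵢ ∈ 𝔪` with `v(xᵢ) = bᵢ`,
the images of the `xᵢ` in `𝔪/𝔪²` are linearly independent over `k = R/𝔪`: any `k`-linear
combination of the `xᵢ` lying in `𝔪²` has all coefficients zero. -/
theorem linearIndependent_mod_sq {k : Type*} [Field k]
    (R : Subalgebra k (PowerSeries k)) (c : ℕ) (hc1 : 1 ≤ c)
    (hcond : ∀ f : PowerSeries k, (X : PowerSeries k) ^ c * f ∈ R)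
    (t : ℕ) (b : Fin t → ℕ) (hb : StrictMono b)
    (hS : vset (mIdeal R) \ vset ((mIdeal R) ^ 2) = Set.range b)
    (x : Fin t → R) (hxm : ∀ i, x i ∈ mIdeal R)
    (hxv : ∀ i, (x i : PowerSeries k).order = (b i : ℕ∞)) :
    ∀ ε : Fin t → k, (∑ i, algebraMap k R (ε i) * x i) ∈ (mIdeal R) ^ 2 →
      ∀ i, ε i = 0 := by
  intro ε hmem
  by_contra hne
  push_neg at hne
  obtain ⟨j, hj⟩ := hne
  classical
  -- minimal index with nonzero coefficient
  obtain ⟨i₀, hi₀mem, hi₀min⟩ := Finset.exists_min_image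
    (Finset.univ.filter (fun i => ε i ≠ 0)) id
    ⟨j, Finset.mem_filter.2 ⟨Finset.mem_univ _, hj⟩⟩
  rw [Finset.mem_filter] at hi₀mem
  have hε₀ : ε i₀ ≠ 0 := hi₀mem.2
  have hmin : ∀ i, ε i ≠ 0 → i₀ ≤ i := fun i hi =>
    hi₀min i (Finset.mem_filter.2 ⟨Finset.mem_univ _, hi⟩)
  set f : R := ∑ i, algebraMap k R (ε i) * x i with hf
  -- coefficient computation
  have hcoeff : ∀ n : ℕ, (PowerSeries.coeff n) (f : PowerSeries k)
      = ∑ i, ε i * (PowerSeries.coeff n) (x i : PowerSeries k) := by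
    intro n
    have : ((f : PowerSeries k)) = ∑ i, (PowerSeries.C) (ε i) * (x i : PowerSeries k) := by
      rw [hf]
      push_cast
      rfl
    rw [this, map_sum]
    refine Finset.sum_congr rfl fun i _ => ?_
    rw [PowerSeries.coeff_C_mul]
  -- coefficients below b i₀ vanish
  have hlow : ∀ n : ℕ, n < b i₀ → (PowerSeries.coeff n) (f : PowerSeries k) = 0 := by
    intro n hn
    rw [hcoeff]
    refine Finset.sum_eq_zero fun i _ => ?_
    by_cases hεi : ε i = 0
    · rw [hεi, zero_mul]
    · have hle : b i₀ ≤ b i := hb.le_iff_le.2 (hmin i hεi)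
      rw [PowerSeries.coeff_of_lt_order n (by rw [hxv i]; exact_mod_cast lt_of_lt_of_le hn hle),
        mul_zero]
  -- coefficient at b i₀ is nonzero
  have hmain : (PowerSeries.coeff (b i₀)) (f : PowerSeries k) ≠ 0 := by
    rw [hcoeff]
    rw [Finset.sum_eq_single i₀]
    · exact mul_ne_zero hε₀ (PowerSeries.order_eq_nat.mp (hxv i₀)).1
    · intro i _ hii
      by_cases hεi : ε i = 0
      · rw [hεi, zero_mul]
      · have hlt : b i₀ < b i := hb (lt_of_le_of_ne (hmin i hεi) (Ne.symm hii))
        rw [PowerSeries.coeff_of_lt_order _ (by rw [hxv i]; exact_mod_cast hlt), mul_zero]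
    · intro h; exact absurd (Finset.mem_univ i₀) h
  have horder : ((f : PowerSeries k)).order = (b i₀ : ℕ∞) := by
    rw [PowerSeries.order_eq_nat]
    exact ⟨hmain, fun i hi => hlow i hi⟩
  have hin : (b i₀ : ℕ) ∈ vset ((mIdeal R) ^ 2) := ⟨f, hmem, horder⟩
  have hrange : (b i₀ : ℕ) ∈ Set.range b := ⟨i₀, rfl⟩
  rw [← hS] at hrange
  exact hrange.2 hin
end

section
/- Let R ⊆ k[[t]] be a k-subalgebra with maximal ideal 𝔪 = R ∩ t·k[[t]] and t^c·k[[t]] ⊆ R. If a₁ < a₂ are the two smallest elements of the Herzog–Kunz set v(𝔪)\v(𝔪²), and w₁ < w₂ are the two smallest minimal generators of the numerical semigroup V(R), then a₁ = w₁ and a₂ = w₂. -/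
open PowerSeries

/-- The value semigroup of `R`. -/
def valueSet {k : Type*} [Field k] (R : Subalgebra k (PowerSeries k)) : Set ℕ :=
  {n | ∃ f ∈ R, f.order = (n : ℕ∞)}

/-- The minimal generators of a numerical semigroup `V ⊆ ℕ`: the nonzero elements of `V`
that are not a sum of two nonzero elements of `V`. -/
def minGens (V : Set ℕ) : Set ℕ :=
  {w ∈ V | w ≠ 0 ∧ ¬ ∃ u u', u ∈ V ∧ u' ∈ V ∧ u ≠ 0 ∧ u' ≠ 0 ∧ u + u' = w}

namespace HKAux

variable {k : Type*} [Field k] {R : Subalgebra k (PowerSeries k)}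

lemma order_neg (φ : PowerSeries k) : (-φ).order = φ.order := by
  have hu : IsUnit (-1 : PowerSeries k) := IsUnit.neg isUnit_one
  have h := order_mul (-1 : PowerSeries k) φ
  rw [neg_one_mul] at h
  rw [h, order_zero_of_unit hu, zero_add]

lemma mem_mIdeal {f : R} : f ∈ mIdeal R ↔ constantCoeff (f : PowerSeries k) = 0 := by
  simp [mIdeal, RingHom.mem_ker]

lemma constCoeff_eq_zero_of_pos_order {φ : PowerSeries k} (h : (0 : ℕ∞) < φ.order) :
    constantCoeff φ = 0 := by
  rw [← coeff_zero_eq_constantCoeff]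
  exact coeff_of_lt_order 0 (by simpa using h)

lemma order_pos_of_mem {f : R} (hf : f ∈ mIdeal R) : (0 : ℕ∞) < (f : PowerSeries k).order := by
  rcases eq_or_ne (f : PowerSeries k) 0 with h | h
  · simp [h, order_zero]
  · rcases lt_or_ge (0 : ℕ∞) (f : PowerSeries k).order with h2 | h2
    · exact h2
    · exfalso
      have h0 : (f : PowerSeries k).order = (0 : ℕ∞) := le_antisymm h2 zero_le
      have := (order_eq_nat (n := 0)).mp (by exact_mod_cast h0)
      exact this.1 (by simpa [coeff_zero_eq_constantCoeff] using mem_mIdeal.mp hf)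

lemma add_mem_valueSet {u v : ℕ} (hu : u ∈ valueSet R) (hv : v ∈ valueSet R) :
    u + v ∈ valueSet R := by
  obtain ⟨f, hf, hfo⟩ := hu
  obtain ⟨g, hg, hgo⟩ := hv
  exact ⟨f * g, R.mul_mem hf hg, by rw [order_mul, hfo, hgo]; push_cast; ring⟩

lemma mul_mem_valueSet {u : ℕ} (hu : u ∈ valueSet R) : ∀ m, 1 ≤ m → m * u ∈ valueSet R := by
  intro m hm
  induction m with
  | zero => omega
  | succ n ih =>
    rcases Nat.eq_or_lt_of_le hm with h | h
    · simpa [← h] using hu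
    · have := add_mem_valueSet (ih (by omega)) hu
      simpa [add_mul, one_mul] using this

lemma mem_vset_mIdeal {n : ℕ} (hn : n ∈ valueSet R) (h0 : n ≠ 0) : n ∈ vset (mIdeal R) := by
  obtain ⟨f, hf, hfo⟩ := hn
  refine ⟨⟨f, hf⟩, mem_mIdeal.mpr ?_, hfo⟩
  apply constCoeff_eq_zero_of_pos_order
  rw [hfo]
  exact_mod_cast Nat.pos_of_ne_zero h0

lemma sum_mem_vset_sq {u u' : ℕ} (hu : u ∈ valueSet R) (hu' : u' ∈ valueSet R)
    (h0 : u ≠ 0) (h0' : u' ≠ 0) : u + u' ∈ vset ((mIdeal R) ^ 2) := by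
  obtain ⟨f, hfR, hfo⟩ := hu
  obtain ⟨g, hgR, hgo⟩ := hu'
  have hfm : (⟨f, hfR⟩ : R) ∈ mIdeal R := by
    apply mem_mIdeal.mpr
    apply constCoeff_eq_zero_of_pos_order
    rw [hfo]; exact_mod_cast Nat.pos_of_ne_zero h0
  have hgm : (⟨g, hgR⟩ : R) ∈ mIdeal R := by
    apply mem_mIdeal.mpr
    apply constCoeff_eq_zero_of_pos_order
    rw [hgo]; exact_mod_cast Nat.pos_of_ne_zero h0'
  refine ⟨⟨f, hfR⟩ * ⟨g, hgR⟩, by rw [pow_two]; exact Ideal.mul_mem_mul hfm hgm, ?_⟩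
  show (f * g).order = _
  rw [order_mul, hfo, hgo]; push_cast; ring

lemma hk_subset_minGens : vset (mIdeal R) \ vset ((mIdeal R) ^ 2) ⊆ minGens (valueSet R) := by
  rintro n ⟨⟨f, hfm, hfo⟩, hnot⟩
  refine ⟨⟨(f : PowerSeries k), f.2, hfo⟩, ?_, ?_⟩
  · rintro rfl
    have := (order_eq_nat (n := 0)).mp (by exact_mod_cast hfo)
    exact this.1 (by simpa [coeff_zero_eq_constantCoeff] using mem_mIdeal.mp hfm)
  · rintro ⟨u, u', huV, hu'V, hu0, hu'0, rfl⟩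
    exact hnot (sum_mem_vset_sq huV hu'V hu0 hu'0)

end HKAux

namespace HKAux2
variable {k : Type*} [Field k] {R : Subalgebra k (PowerSeries k)}


-- abstract versions about minGens
lemma least_nonzero {V : Set ℕ} {w₁ : ℕ} (hw₁ : IsLeast (minGens V) w₁) :
    ∀ n ∈ V, n ≠ 0 → w₁ ≤ n := by
  intro n
  induction n using Nat.strong_induction_on with
  | _ n ih =>
    intro hn h0
    by_cases hmg : n ∈ minGens V
    · exact hw₁.2 hmg
    · have hex : ∃ u u', u ∈ V ∧ u' ∈ V ∧ u ≠ 0 ∧ u' ≠ 0 ∧ u + u' = n := by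
        by_contra hne
        exact hmg ⟨hn, h0, hne⟩
      obtain ⟨u, u', huV, hu'V, hu0, hu'0, hsum⟩ := hex
      have hlt : u < n := by omega
      exact le_trans (ih u hlt huV hu0) (by omega)

lemma dvd_of_lt_w2 {V : Set ℕ} {w₁ w₂ : ℕ} (hw₁ : IsLeast (minGens V) w₁)
    (hw₂ : IsLeast (minGens V \ {w₁}) w₂) :
    ∀ n ∈ V, n ≠ 0 → n < w₂ → w₁ ∣ n := by
  intro n
  induction n using Nat.strong_induction_on with
  | _ n ih =>
    intro hn h0 hlt
    by_cases hmg : n ∈ minGens V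
    · rcases eq_or_ne n w₁ with rfl | hne
      · exact dvd_refl _
      · exact absurd (hw₂.2 ⟨hmg, hne⟩) (by omega)
    · have hex : ∃ u u', u ∈ V ∧ u' ∈ V ∧ u ≠ 0 ∧ u' ≠ 0 ∧ u + u' = n := by
        by_contra hne
        exact hmg ⟨hn, h0, hne⟩
      obtain ⟨u, u', huV, hu'V, hu0, hu'0, hsum⟩ := hex
      have h1 : w₁ ∣ u := ih u (by omega) huV hu0 (by omega)
      have h2 : w₁ ∣ u' := ih u' (by omega) hu'V hu'0 (by omega)
      rw [← hsum]; exact dvd_add h1 h2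

variable {w₁ : ℕ} {x : PowerSeries k} (hxo : x.order = (w₁ : ℕ∞))

include hxo in
lemma order_x_pow (e : ℕ) : (x ^ e).order = ((e * w₁ : ℕ) : ℕ∞) := by
  induction e with
  | zero => simp [order_one]
  | succ n ih =>
    rw [pow_succ, order_mul, ih, hxo]
    push_cast; ring

include hxo in
lemma order_aeval_ge (p : Polynomial k) (j : ℕ) (hp : ∀ i < j, p.coeff i = 0) :
    ((j * w₁ : ℕ) : ℕ∞) ≤ (Polynomial.aeval x p).order := by
  apply nat_le_order
  intro i hi
  rw [Polynomial.aeval_def, Polynomial.eval₂_eq_sum, Polynomial.sum_def, map_sum]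
  apply Finset.sum_eq_zero
  intro e he
  have hje : j ≤ e := by
    by_contra hc
    exact (Polynomial.mem_support_iff.mp he) (hp e (lt_of_not_ge hc))
  apply coeff_of_lt_order
  calc (i : ℕ∞) < ((j * w₁ : ℕ) : ℕ∞) := by exact_mod_cast hi
    _ ≤ ((e * w₁ : ℕ) : ℕ∞) := by exact_mod_cast Nat.mul_le_mul_right _ hje
    _ = (x ^ e).order := (order_x_pow hxo e).symm
    _ ≤ (algebraMap k (PowerSeries k) (p.coeff e)).order + (x ^ e).order := le_add_self
    _ ≤ _ := le_order_mul _ _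


open HKAux

variable {w₂ : ℕ} (hxR : x ∈ R)

include hxo hxR in
lemma normalize (hdvd : ∀ n ∈ valueSet R, n ≠ 0 → n < w₂ → w₁ ∣ n) :
    ∀ d : ℕ, ∀ f : PowerSeries k, f ∈ R → constantCoeff f = 0 →
      ((w₂ - d : ℕ) : ℕ∞) ≤ f.order →
      ∃ p : Polynomial k, p.coeff 0 = 0 ∧
        ((w₂ : ℕ) : ℕ∞) ≤ (f - Polynomial.aeval x p).order := by
  intro d
  induction d with
  | zero =>
    intro f hfR hf0 hford
    exact ⟨0, by simp, by simpa using hford⟩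
  | succ d ih =>
    intro f hfR hf0 hford
    by_cases hcase : ((w₂ - d : ℕ) : ℕ∞) ≤ f.order
    · exact ih f hfR hf0 hcase
    · push_neg at hcase
      have hne : f.order ≠ ⊤ := (hcase.trans_le le_top).ne
      obtain ⟨n, hn⟩ : ∃ n : ℕ, f.order = (n : ℕ∞) := by
        lift f.order to ℕ using hne with n hn
        exact ⟨n, rfl⟩
      rw [hn] at hcase hford
      have hnlt : n < w₂ - d := by exact_mod_cast hcase
      have hnge : w₂ - (d + 1) ≤ n := by exact_mod_cast hford
      have hcoeffn : coeff n f ≠ 0 := ((order_eq_nat).mp hn).1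
      have hn0 : n ≠ 0 := by
        rintro rfl
        exact hcoeffn (by simpa [coeff_zero_eq_constantCoeff] using hf0)
      obtain ⟨m, hm⟩ : w₁ ∣ n := hdvd n ⟨f, hfR, hn⟩ hn0 (by omega)
      have hm0 : m ≠ 0 := by rintro rfl; omega
      have hxm : (x ^ m).order = (n : ℕ∞) := by
        rw [order_x_pow hxo, hm]; norm_cast; ring
      have hcx : coeff n (x ^ m) ≠ 0 := ((order_eq_nat).mp hxm).1
      set a := coeff n f / coeff n (x ^ m) with ha
      have hCa : (C a : PowerSeries k) = algebraMap k (PowerSeries k) a := by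
        rw [PowerSeries.algebraMap_apply]; simp
      set g := f - C a * x ^ m with hgdef
      have hterm_ord : ((n : ℕ) : ℕ∞) ≤ (C a * x ^ m).order := by
        calc ((n : ℕ) : ℕ∞) = (x ^ m).order := hxm.symm
          _ ≤ (C a).order + (x ^ m).order := le_add_self
          _ ≤ _ := le_order_mul _ _
      have hgord : ((n + 1 : ℕ) : ℕ∞) ≤ g.order := by
        apply nat_le_order
        intro i hi
        rcases Nat.lt_or_ge i n with h | h
        · rw [hgdef, map_sub, coeff_of_lt_order i (by rw [hn]; exact_mod_cast h),
            coeff_of_lt_order i (lt_of_lt_of_le (by exact_mod_cast h) hterm_ord), sub_zero]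
        · have hin : i = n := by omega
          subst hin
          rw [hgdef, map_sub, coeff_C_mul, ha, div_mul_cancel₀ _ hcx, sub_self]
      have hgR : g ∈ R :=
        R.sub_mem hfR (R.mul_mem (hCa ▸ R.algebraMap_mem a) (R.pow_mem hxR m))
      have hg0 : constantCoeff g = 0 := by
        apply constCoeff_eq_zero_of_pos_order
        exact lt_of_lt_of_le (by exact_mod_cast Nat.succ_pos n) hgord
      have hgbound : ((w₂ - d : ℕ) : ℕ∞) ≤ g.order :=
        le_trans (by exact_mod_cast (show w₂ - d ≤ n + 1 by omega)) hgord
      obtain ⟨p', hp'0, hp'ord⟩ := ih g hgR hg0 hgbound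
      refine ⟨Polynomial.C a * Polynomial.X ^ m + p', ?_, ?_⟩
      · simp [Polynomial.coeff_X_pow, hp'0, hm0, Ne.symm hm0]
      · have heq : f - Polynomial.aeval x (Polynomial.C a * Polynomial.X ^ m + p')
            = g - Polynomial.aeval x p' := by
          rw [map_add, map_mul, Polynomial.aeval_C, map_pow, Polynomial.aeval_X, hgdef, ← hCa]
          ring
        rw [heq]; exact hp'ord

set_option synthInstance.maxHeartbeats 1000000 in
include hxo hxR in
lemma sq_decomp (hdvd : ∀ n ∈ valueSet R, n ≠ 0 → n < w₂ → w₁ ∣ n) (hw12 : w₁ ≤ w₂) :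
    ∀ g : R, g ∈ (mIdeal R) ^ 2 →
      ∃ q : Polynomial k, q.coeff 0 = 0 ∧ q.coeff 1 = 0 ∧
        ((w₁ + w₂ : ℕ) : ℕ∞) ≤ ((g : PowerSeries k) - Polynomial.aeval x q).order := by
  intro g hg
  rw [pow_two] at hg
  refine Submodule.smul_induction_on hg ?_ ?_
  · intro f hf f' hf'
    rw [smul_eq_mul]
    obtain ⟨p, hp0, hpord⟩ := normalize hxo hxR hdvd w₂ (f : PowerSeries k) f.2
      (mem_mIdeal.mp hf) (by simp)
    obtain ⟨p', hp'0, hp'ord⟩ := normalize hxo hxR hdvd w₂ (f' : PowerSeries k) f'.2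
      (mem_mIdeal.mp hf') (by simp)
    have hA : ((1 * w₁ : ℕ) : ℕ∞) ≤ (Polynomial.aeval x p).order :=
      order_aeval_ge hxo p 1 (by intro i hi; interval_cases i; exact hp0)
    have hA' : ((1 * w₁ : ℕ) : ℕ∞) ≤ (Polynomial.aeval x p').order :=
      order_aeval_ge hxo p' 1 (by intro i hi; interval_cases i; exact hp'0)
    set h₁ := (f : PowerSeries k) - Polynomial.aeval x p with hh₁
    set h₂ := (f' : PowerSeries k) - Polynomial.aeval x p' with hh₂
    refine ⟨p * p', by simp [Polynomial.mul_coeff_zero, hp0], ?_, ?_⟩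
    · rw [Polynomial.coeff_mul]
      rw [show Finset.HasAntidiagonal.antidiagonal 1 = {(0, 1), (1, 0)} from rfl]
      simp [hp0, hp'0]
    · have hexp : ((f * f' : R) : PowerSeries k) - Polynomial.aeval x (p * p')
          = Polynomial.aeval x p * h₂ + h₁ * Polynomial.aeval x p' + h₁ * h₂ := by
        have hcoe : ((f * f' : R) : PowerSeries k) = (f : PowerSeries k) * (f' : PowerSeries k) := rfl
        rw [hcoe, map_mul, hh₁, hh₂]; ring
      rw [hexp]
      have hb1 : ((w₁ + w₂ : ℕ) : ℕ∞) ≤ (Polynomial.aeval x p * h₂).order := by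
        calc ((w₁ + w₂ : ℕ) : ℕ∞) = ((1 * w₁ : ℕ) : ℕ∞) + ((w₂ : ℕ) : ℕ∞) := by push_cast; ring
          _ ≤ (Polynomial.aeval x p).order + h₂.order := add_le_add hA hp'ord
          _ ≤ _ := le_order_mul _ _
      have hb2 : ((w₁ + w₂ : ℕ) : ℕ∞) ≤ (h₁ * Polynomial.aeval x p').order := by
        calc ((w₁ + w₂ : ℕ) : ℕ∞) = ((w₂ : ℕ) : ℕ∞) + ((1 * w₁ : ℕ) : ℕ∞) := by push_cast; ring
          _ ≤ h₁.order + (Polynomial.aeval x p').order := add_le_add hpord hA'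
          _ ≤ _ := le_order_mul _ _
      have hb3 : ((w₁ + w₂ : ℕ) : ℕ∞) ≤ (h₁ * h₂).order := by
        calc ((w₁ + w₂ : ℕ) : ℕ∞) ≤ ((w₂ : ℕ) : ℕ∞) + ((w₂ : ℕ) : ℕ∞) := by
              exact_mod_cast Nat.add_le_add_right hw12 w₂
          _ ≤ h₁.order + h₂.order := add_le_add hpord hp'ord
          _ ≤ _ := le_order_mul _ _
      exact le_trans (le_min (le_trans (le_min hb1 hb2) (min_order_le_order_add _ _)) hb3)
        (min_order_le_order_add _ _)
  · intro y z hy hz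
    obtain ⟨q, hq0, hq1, hqord⟩ := hy
    obtain ⟨q', hq'0, hq'1, hq'ord⟩ := hz
    refine ⟨q + q', by simp [hq0, hq'0], by simp [hq1, hq'1], ?_⟩
    have heq : ((y + z : R) : PowerSeries k) - Polynomial.aeval x (q + q')
        = ((y : PowerSeries k) - Polynomial.aeval x q)
          + ((z : PowerSeries k) - Polynomial.aeval x q') := by
      have hcoe : ((y + z : R) : PowerSeries k) = (y : PowerSeries k) + (z : PowerSeries k) := rfl
      rw [hcoe, map_add]; ring
    rw [heq]
    exact le_trans (le_min hqord hq'ord) (min_order_le_order_add _ _)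

include hxo hxR in
lemma small_sq (hdvd : ∀ n ∈ valueSet R, n ≠ 0 → n < w₂ → w₁ ∣ n) (hw12 : w₁ ≤ w₂)
    (hw₁pos : w₁ ≠ 0) :
    ∀ n ∈ vset ((mIdeal R) ^ 2), n ≤ w₂ → ∃ m, 2 ≤ m ∧ n = m * w₁ := by
  rintro n ⟨g, hg, hgo⟩ hnle
  obtain ⟨q, hq0, hq1, hqord⟩ := sq_decomp hxo hxR hdvd hw12 g hg
  set h := (g : PowerSeries k) - Polynomial.aeval x q with hh
  set y := Polynomial.aeval x q with hy
  have hho : (n : ℕ∞) < h.order :=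
    lt_of_lt_of_le (by exact_mod_cast (show n < w₁ + w₂ by omega)) hqord
  have hyo : y.order = (n : ℕ∞) := by
    have hyeq : y = (g : PowerSeries k) - h := by rw [hh]; ring
    rw [hyeq, sub_eq_add_neg, order_add_of_order_ne]
    · rw [hgo, HKAux.order_neg]
      exact min_eq_left (le_of_lt hho)
    · rw [hgo, HKAux.order_neg]
      exact ne_of_lt hho
  have hq_ne : q ≠ 0 := by
    rintro rfl
    simp [hy, order_zero] at hyo
  set m₀ := q.natTrailingDegree with hm₀
  have hm₀2 : 2 ≤ m₀ :=
    Polynomial.le_natTrailingDegree hq_ne (by intro i hi; interval_cases i; exacts [hq0, hq1])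
  have hc : q.coeff m₀ ≠ 0 := Polynomial.coeff_natTrailingDegree_ne_zero.mpr hq_ne
  set q₂ := q - Polynomial.C (q.coeff m₀) * Polynomial.X ^ m₀ with hq₂
  have hq₂c : ∀ i < m₀ + 1, q₂.coeff i = 0 := by
    intro i hi
    rcases Nat.lt_or_ge i m₀ with hlt | hge
    · simp [hq₂, Polynomial.coeff_X_pow, Polynomial.coeff_eq_zero_of_lt_natTrailingDegree hlt,
        Nat.ne_of_lt hlt]
    · have : i = m₀ := by omega
      subst this
      simp [hq₂, Polynomial.coeff_X_pow]
  have h2ord : (((m₀ + 1) * w₁ : ℕ) : ℕ∞) ≤ (Polynomial.aeval x q₂).order :=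
    order_aeval_ge hxo q₂ (m₀ + 1) hq₂c
  have hCo : (algebraMap k (PowerSeries k) (q.coeff m₀)).order = ((0 : ℕ) : ℕ∞) := by
    rw [order_eq_nat]
    constructor
    · simpa [coeff_zero_eq_constantCoeff, PowerSeries.algebraMap_apply] using hc
    · intro i hi; exact absurd hi (Nat.not_lt_zero i)
  have hlead : (algebraMap k (PowerSeries k) (q.coeff m₀) * x ^ m₀).order
      = ((m₀ * w₁ : ℕ) : ℕ∞) := by
    rw [order_mul, order_x_pow hxo, hCo]
    push_cast; ring
  have hstep : ((m₀ * w₁ : ℕ) : ℕ∞) < (Polynomial.aeval x q₂).order := by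
    refine lt_of_lt_of_le ?_ h2ord
    exact_mod_cast (Nat.mul_lt_mul_right (Nat.pos_of_ne_zero hw₁pos)).mpr (Nat.lt_succ_self m₀)
  have hysplit : y = algebraMap k (PowerSeries k) (q.coeff m₀) * x ^ m₀
      + Polynomial.aeval x q₂ := by
    rw [hy, hq₂, map_sub, map_mul, Polynomial.aeval_C, map_pow, Polynomial.aeval_X]; ring
  have hyo2 : y.order = ((m₀ * w₁ : ℕ) : ℕ∞) := by
    rw [hysplit, order_add_of_order_ne]
    · rw [hlead]
      exact min_eq_left (hlead ▸ le_of_lt (hlead ▸ hstep))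
    · rw [hlead]
      exact ne_of_lt hstep
  have hn : n = m₀ * w₁ := by
    have := hyo.symm.trans hyo2
    exact_mod_cast this
  exact ⟨m₀, hm₀2, hn⟩

end HKAux2

/-- the two smallest elements of the Herzog–Kunz set `v(𝔪)\v(𝔪²)` agree with
the two smallest minimal generators of the value semigroup `V(R)`. -/
theorem first_two_herzogKunz_eq_first_two_minGens {k : Type*} [Field k]
    (R : Subalgebra k (PowerSeries k)) (c : ℕ) (hc1 : 1 ≤ c)
    (hcond : ∀ f : PowerSeries k, (X : PowerSeries k) ^ c * f ∈ R)
    (a₁ a₂ w₁ w₂ : ℕ)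
    (ha₁ : IsLeast (vset (mIdeal R) \ vset ((mIdeal R) ^ 2)) a₁)
    (ha₂ : IsLeast ((vset (mIdeal R) \ vset ((mIdeal R) ^ 2)) \ {a₁}) a₂)
    (hw₁ : IsLeast (minGens (valueSet R)) w₁)
    (hw₂ : IsLeast (minGens (valueSet R) \ {w₁}) w₂) :
    a₁ = w₁ ∧ a₂ = w₂ := by
  open HKAux HKAux2 in
  have hw₁V : w₁ ∈ valueSet R := hw₁.1.1
  have hw₁0 : w₁ ≠ 0 := hw₁.1.2.1
  have hw₂mg : w₂ ∈ minGens (valueSet R) := hw₂.1.1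
  have hw₂V : w₂ ∈ valueSet R := hw₂mg.1
  have hw₂0 : w₂ ≠ 0 := hw₂mg.2.1
  have hw₂ne : w₂ ≠ w₁ := hw₂.1.2
  have hw12 : w₁ ≤ w₂ := hw₁.2 hw₂mg
  have hdvd : ∀ n ∈ valueSet R, n ≠ 0 → n < w₂ → w₁ ∣ n := dvd_of_lt_w2 hw₁ hw₂
  obtain ⟨x, hxR, hxo⟩ := id hw₁V
  have hsmall := small_sq (w₂ := w₂) hxo hxR hdvd hw12 hw₁0
  -- w₁ not in vset(𝔪²)
  have hw₁nsq : w₁ ∉ vset ((mIdeal R) ^ 2) := by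
    intro hmem
    obtain ⟨m, hm2, hmeq⟩ := hsmall w₁ hmem hw12
    have h2 : 2 * w₁ ≤ m * w₁ := Nat.mul_le_mul_right _ hm2
    omega
  -- w₂ not in vset(𝔪²)
  have hw₂nsq : w₂ ∉ vset ((mIdeal R) ^ 2) := by
    intro hmem
    obtain ⟨m, hm2, hmeq⟩ := hsmall w₂ hmem le_rfl
    have hmm : (m - 1) * w₁ ∈ valueSet R := mul_mem_valueSet hw₁V (m - 1) (by omega)
    have hmm0 : (m - 1) * w₁ ≠ 0 := Nat.mul_ne_zero (by omega) hw₁0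
    have hsum : w₁ + (m - 1) * w₁ = w₂ := by
      rw [hmeq]
      have hmrw : m = 1 + (m - 1) := by omega
      conv_rhs => rw [hmrw]
      rw [add_mul, one_mul]
    exact hw₂mg.2.2 ⟨w₁, (m - 1) * w₁, hw₁V, hmm, hw₁0, hmm0, hsum⟩
  have hw₁hk : w₁ ∈ vset (mIdeal R) \ vset ((mIdeal R) ^ 2) :=
    ⟨mem_vset_mIdeal hw₁V hw₁0, hw₁nsq⟩
  have hw₂hk : w₂ ∈ vset (mIdeal R) \ vset ((mIdeal R) ^ 2) :=
    ⟨mem_vset_mIdeal hw₂V hw₂0, hw₂nsq⟩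
  have ha1 : a₁ = w₁ :=
    le_antisymm (ha₁.2 hw₁hk) (hw₁.2 (hk_subset_minGens ha₁.1))
  refine ⟨ha1, ?_⟩
  have ha₂mem := ha₂.1
  have ha₂ne : a₂ ≠ w₁ := by
    have := ha₂mem.2
    simpa [ha1] using this
  have h1 : a₂ ≤ w₂ := ha₂.2 ⟨hw₂hk, by simp [ha1, hw₂ne]⟩
  have h2 : w₂ ≤ a₂ := hw₂.2 ⟨hk_subset_minGens ha₂mem.1, by simpa using ha₂ne⟩
  exact le_antisymm h1 h2
end

section
/- Let R ⊆ k[[t]] be a k-subalgebra with maximal ideal 𝔪 = R ∩ t·k[[t]] and t^c·k[[t]] ⊆ R. Then the Herzog–Kunz set v(𝔪)\v(𝔪²) is contained in the set of minimal generators of the value semigroup V(R), i.e., every a ∈ v(𝔪)\v(𝔪²) cannot be written as a sum of two nonzero elements of V(R). -/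
open PowerSeries

/-- every element of the Herzog–Kunz set `v(𝔪)\v(𝔪²)` is a minimal generator
of the value semigroup `V(R)`: it lies in `V(R)` and is not a sum of two nonzero elements
of `V(R)`. -/
theorem herzogKunz_subset_minGens {k : Type*} [Field k]
    (R : Subalgebra k (PowerSeries k)) (c : ℕ) (hc1 : 1 ≤ c)
    (hcond : ∀ f : PowerSeries k, (X : PowerSeries k) ^ c * f ∈ R) :
    ∀ a ∈ vset (mIdeal R) \ vset ((mIdeal R) ^ 2),
      a ∈ valueSet R ∧
      ¬ ∃ u u', u ∈ valueSet R ∧ u' ∈ valueSet R ∧ u ≠ 0 ∧ u' ≠ 0 ∧ u + u' = a := by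
  rintro a ⟨⟨f, hfm, hford⟩, ha2⟩
  constructor
  · exact ⟨f, f.2, hford⟩
  · rintro ⟨u, u', ⟨g, hgR, hgord⟩, ⟨g', hg'R, hg'ord⟩, hu, hu', huu⟩
    apply ha2
    refine ⟨⟨g, hgR⟩ * ⟨g', hg'R⟩, ?_, ?_⟩
    · have hmem : ∀ (h : PowerSeries k) (hR : h ∈ R) (n : ℕ), n ≠ 0 →
          h.order = (n : ℕ∞) → (⟨h, hR⟩ : R) ∈ mIdeal R := by
        intro h hR n hn hord
        simp only [mIdeal, RingHom.mem_ker, RingHom.comp_apply]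
        show (constantCoeff : PowerSeries k →+* k) h = 0
        have : (0 : ℕ∞) < h.order := by
          rw [hord]
          exact_mod_cast Nat.pos_of_ne_zero hn
        simpa [coeff_zero_eq_constantCoeff] using PowerSeries.coeff_of_lt_order 0 this
      have := Ideal.mul_mem_mul (hmem g hgR u hu hgord) (hmem g' hg'R u' hu' hg'ord)
      rwa [← sq] at this
    · show (g * g').order = (a : ℕ∞)
      rw [PowerSeries.order_mul, hgord, hg'ord, ← huu]
      exact_mod_cast rfl
end

section
/- Let R ⊆ k[[t]] be a k-subalgebra with 𝔪 = R ∩ t·k[[t]] and t^c·k[[t]] ⊆ R, and let a_n = max(v(𝔪)\v(𝔪²)). Then every f ∈ R with v(f) > a_n lies in 𝔪². -/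
open PowerSeries

lemma mem_mIdeal_iff {k : Type*} [Field k] {R : Subalgebra k (PowerSeries k)} (f : R) :
    f ∈ mIdeal R ↔ constantCoeff (f : PowerSeries k) = 0 := by
  simp [mIdeal, RingHom.mem_ker]

set_option synthInstance.maxHeartbeats 400000 in
set_option maxHeartbeats 1000000 in
/-- if `a_n` is the largest element of the Herzog–Kunz set `v(𝔪)\v(𝔪²)`,
then every `f ∈ R` with `v(f) > a_n` lies in `𝔪²`. -/
theorem mem_sq_of_order_gt_max {k : Type*} [Field k]
    (R : Subalgebra k (PowerSeries k)) (c : ℕ) (hc1 : 1 ≤ c)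
    (hcond : ∀ f : PowerSeries k, (X : PowerSeries k) ^ c * f ∈ R)
    (aₙ : ℕ) (han : IsGreatest (vset (mIdeal R) \ vset ((mIdeal R) ^ 2)) aₙ) :
    ∀ f : R, (aₙ : ℕ∞) < (f : PowerSeries k).order → f ∈ (mIdeal R) ^ 2 := by
  have hXc : (X : PowerSeries k) ^ c ∈ R := by simpa using hcond 1
  -- Base case: order ≥ 2c implies membership in 𝔪².
  have hbase : ∀ f : R, ((2 * c : ℕ) : ℕ∞) ≤ (f : PowerSeries k).order →
      f ∈ (mIdeal R) ^ 2 := by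
    intro f hf
    obtain ⟨h, hh⟩ : (X : PowerSeries k) ^ (2 * c) ∣ (f : PowerSeries k) := by
      rw [PowerSeries.X_pow_dvd_iff]
      intro m hm
      exact PowerSeries.coeff_of_lt_order m (lt_of_lt_of_le (by exact_mod_cast hm) hf)
    set a : R := ⟨(X : PowerSeries k) ^ c, hXc⟩ with ha_def
    set b : R := ⟨(X : PowerSeries k) ^ c * h, hcond h⟩ with hb_def
    have hfab : f = a * b := by
      apply Subtype.ext
      show (f : PowerSeries k) = (X : PowerSeries k) ^ c * ((X : PowerSeries k) ^ c * h)
      rw [hh, two_mul, pow_add, mul_assoc]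
    have ha : a ∈ mIdeal R := by
      rw [mem_mIdeal_iff]
      show constantCoeff ((X : PowerSeries k) ^ c) = 0
      rw [map_pow, PowerSeries.constantCoeff_X, zero_pow (by omega)]
    have hb : b ∈ mIdeal R := by
      rw [mem_mIdeal_iff]
      show constantCoeff ((X : PowerSeries k) ^ c * h) = 0
      rw [map_mul, map_pow, PowerSeries.constantCoeff_X, zero_pow (by omega), zero_mul]
    rw [hfab, pow_two]
    exact Ideal.mul_mem_mul ha hb
  -- Downward induction.
  have key : ∀ j : ℕ, ∀ f : R, (aₙ : ℕ∞) < (f : PowerSeries k).order →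
      ((2 * c - j : ℕ) : ℕ∞) ≤ (f : PowerSeries k).order → f ∈ (mIdeal R) ^ 2 := by
    intro j
    induction j with
    | zero => intro f _ hord; exact hbase f (by simpa using hord)
    | succ j ih =>
      intro f haf hord
      by_cases h2 : ((2 * c - j : ℕ) : ℕ∞) ≤ (f : PowerSeries k).order
      · exact ih f haf h2
      push_neg at h2
      -- order f is finite
      have htop : (f : PowerSeries k).order ≠ ⊤ := by
        intro h; rw [h] at h2; exact absurd h2 (not_top_lt)
      obtain ⟨m, hm⟩ := WithTop.ne_top_iff_exists.mp htop
      have hm' : (f : PowerSeries k).order = (m : ℕ∞) := hm.symm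
      have hmlt : m < 2 * c - j := by rw [← hm] at h2; exact ENat.coe_lt_coe.mp h2
      have hmge : 2 * c - (j + 1) ≤ m := by rw [← hm] at hord; exact ENat.coe_le_coe.mp hord
      have hman : aₙ < m := by rw [← hm] at haf; exact ENat.coe_lt_coe.mp haf
      -- f ∈ 𝔪
      have hfm : f ∈ mIdeal R := by
        rw [mem_mIdeal_iff, ← PowerSeries.coeff_zero_eq_constantCoeff_apply]
        exact PowerSeries.coeff_of_lt_order 0
          (lt_of_le_of_lt (by exact_mod_cast Nat.zero_le aₙ) haf)
      have hmvset : m ∈ vset (mIdeal R) := ⟨f, hfm, hm'⟩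
      have hmsq : m ∈ vset ((mIdeal R) ^ 2) := by
        by_contra hcon
        exact absurd (han.2 ⟨hmvset, hcon⟩) (by omega)
      obtain ⟨g, hg2, hgord⟩ := hmsq
      have hgcoeff : PowerSeries.coeff m (g : PowerSeries k) ≠ 0 :=
        (PowerSeries.order_eq_nat.mp hgord).1
      set α : k := PowerSeries.coeff m (f : PowerSeries k) /
        PowerSeries.coeff m (g : PowerSeries k) with hα
      set f' : R := f - (algebraMap k R α) * g with hf'
      have hcoe : (f' : PowerSeries k) =
          (f : PowerSeries k) - PowerSeries.C α * (g : PowerSeries k) := by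
        simp only [hf', AddSubgroupClass.coe_sub, MulMemClass.coe_mul,
          Algebra.algebraMap_eq_smul_one, smul_mul_assoc, one_mul,
          SetLike.val_smul, PowerSeries.smul_eq_C_mul]
      have hordf' : ((m + 1 : ℕ) : ℕ∞) ≤ (f' : PowerSeries k).order := by
        apply PowerSeries.nat_le_order
        intro i hi
        rw [hcoe, map_sub, PowerSeries.coeff_C_mul]
        rcases lt_or_eq_of_le (Nat.lt_succ_iff.mp hi) with hlt | heq
        · rw [PowerSeries.coeff_of_lt_order i (by rw [hm']; exact_mod_cast hlt),
            PowerSeries.coeff_of_lt_order i (by rw [hgord]; exact_mod_cast hlt),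
            mul_zero, sub_zero]
        · subst heq
          rw [hα, div_mul_cancel₀ _ hgcoeff, sub_self]
      have hf'mem : f' ∈ (mIdeal R) ^ 2 := by
        apply ih f'
        · exact lt_of_lt_of_le (by exact_mod_cast Nat.lt_succ_of_lt hman) hordf'
        · exact le_trans (by exact_mod_cast (by omega : 2 * c - j ≤ m + 1)) hordf'
      have : f = f' + (algebraMap k R α) * g := by rw [hf']; ring
      rw [this]
      exact Ideal.add_mem _ hf'mem (Ideal.mul_mem_left _ _ hg2)
  intro f hf
  exact key (2 * c) f hf (by simp)
end

section
/- Let R ⊆ k[[t]] be a k-subalgebra with 𝔪 = R ∩ t·k[[t]], t^{c_R}·k[[t]] ⊆ R, and Herzog–Kunz set {a₁ < … < a_n} = v(𝔪)\v(𝔪²). Suppose a_{i₀} ≥ c_R for some i₀. Then there exist Herzog–Kunz generators x₁,…,x_n of 𝔪 (elements with v(xᵢ) = aᵢ generating 𝔪) such that xᵢ = t^{aᵢ} for all i ≥ i₀. -/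
open PowerSeries

set_option synthInstance.maxHeartbeats 1000000
set_option maxHeartbeats 2000000

/-- Auxiliary: the ideal of elements of `R` of order at least `m`. -/
def HKorderIdeal {k : Type*} [Field k] (R : Subalgebra k (PowerSeries k)) (m : ℕ) :
    Ideal R where
  carrier := {g | (m : ℕ∞) ≤ (g : PowerSeries k).order}
  add_mem' := by
    intro p q hp hq
    exact le_trans (le_min hp hq) (min_order_le_order_add _ _)
  zero_mem' := by
    show (m : ℕ∞) ≤ ((0 : PowerSeries k)).order
    simp [order_zero]
  smul_mem' := by
    intro r g hg
    show (m : ℕ∞) ≤ ((r : PowerSeries k) * (g : PowerSeries k)).order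
    calc (m : ℕ∞) ≤ (g : PowerSeries k).order := hg
    _ ≤ (r : PowerSeries k).order + (g : PowerSeries k).order := le_add_self
    _ ≤ _ := le_order_mul _ _

lemma HKmem_orderIdeal {k : Type*} [Field k] {R : Subalgebra k (PowerSeries k)} {m : ℕ}
    {g : R} : g ∈ HKorderIdeal R m ↔ (m : ℕ∞) ≤ (g : PowerSeries k).order := Iff.rfl

lemma HKmul_le {k : Type*} [Field k] (R : Subalgebra k (PowerSeries k)) (i j : ℕ) :
    HKorderIdeal R i * HKorderIdeal R j ≤ HKorderIdeal R (i + j) := by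
  rw [Ideal.mul_le]
  intro p hp q hq
  rw [HKmem_orderIdeal] at *
  show ((i + j : ℕ) : ℕ∞) ≤ ((p : PowerSeries k) * (q : PowerSeries k)).order
  push_cast
  exact le_trans (add_le_add hp hq) (le_order_mul _ _)

lemma HKpow_le {k : Type*} [Field k] (R : Subalgebra k (PowerSeries k)) (m : ℕ) :
    HKorderIdeal R 1 ^ m ≤ HKorderIdeal R m := by
  induction m with
  | zero => intro g _; rw [HKmem_orderIdeal]; simp
  | succ m ih =>
      calc HKorderIdeal R 1 ^ (m+1) = HKorderIdeal R 1 ^ m * HKorderIdeal R 1 := pow_succ _ _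
      _ ≤ HKorderIdeal R m * HKorderIdeal R 1 := Ideal.mul_mono_left ih
      _ ≤ HKorderIdeal R (m + 1) := HKmul_le R m 1

lemma HKmem_of_le_order {k : Type*} [Field k] {R : Subalgebra k (PowerSeries k)} {c : ℕ}
    (hcond : ∀ f : PowerSeries k, (X : PowerSeries k) ^ c * f ∈ R)
    {f : PowerSeries k} (hf : (c : ℕ∞) ≤ f.order) : f ∈ R := by
  obtain ⟨g, rfl⟩ : (X : PowerSeries k) ^ c ∣ f := by
    rw [X_pow_dvd_iff]
    intro m hm
    exact coeff_of_lt_order m (lt_of_lt_of_le (by exact_mod_cast hm) hf)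
  exact hcond g

/-- if the Herzog–Kunz sequence `a₁ < … < a_n` satisfies `a_{i₀} ≥ c_R`,
then there are Herzog–Kunz generators `x₁,…,x_n` of `𝔪` with `xᵢ = t^{aᵢ}` for `i ≥ i₀`. -/
theorem exists_monomial_tail_generators {k : Type*} [Field k]
    (R : Subalgebra k (PowerSeries k)) (c : ℕ) (hc1 : 1 ≤ c)
    (hcond : ∀ f : PowerSeries k, (X : PowerSeries k) ^ c * f ∈ R)
    (hleast : ∀ c' : ℕ, (∀ f : PowerSeries k, (X : PowerSeries k) ^ c' * f ∈ R) → c ≤ c')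
    (n : ℕ) (a : Fin n → ℕ) (ha : StrictMono a)
    (hS : vset (mIdeal R) \ vset ((mIdeal R) ^ 2) = Set.range a)
    (i₀ : Fin n) (hi₀ : c ≤ a i₀) :
    ∃ x : Fin n → R,
      (∀ i, (x i : PowerSeries k).order = (a i : ℕ∞)) ∧
      Ideal.span (Set.range x) = mIdeal R ∧
      (∀ i, i₀ ≤ i → (x i : PowerSeries k) = (X : PowerSeries k) ^ (a i)) := by
  classical
  have hmk : ∀ g : R, g ∈ mIdeal R ↔ (constantCoeff : PowerSeries k →+* k) (g : PowerSeries k) = 0 := by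
    intro g; exact RingHom.mem_ker
  have hvals : ∀ i : Fin n, (a i) ∈ vset (mIdeal R) \ vset ((mIdeal R)^2) := by
    intro i; rw [hS]; exact Set.mem_range_self i
  have hax : ∀ i : Fin n, ∃ f : R, f ∈ mIdeal R ∧ (f : PowerSeries k).order = (a i : ℕ∞) := by
    intro i
    obtain ⟨f, hf, hfo⟩ := (hvals i).1
    exact ⟨f, hf, hfo⟩
  have hca : ∀ i : Fin n, i₀ ≤ i → c ≤ a i := fun i h => le_trans hi₀ (ha.monotone h)
  have hXmem : ∀ i : Fin n, i₀ ≤ i → (X : PowerSeries k) ^ (a i) ∈ R := by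
    intro i h
    have := hcond ((X : PowerSeries k) ^ (a i - c))
    rwa [← pow_add, Nat.add_sub_cancel' (hca i h)] at this
  set x : Fin n → R := fun i =>
    if h : i₀ ≤ i then ⟨(X : PowerSeries k) ^ (a i), hXmem i h⟩
    else Classical.choose (hax i) with hxdef
  have hmono : ∀ i, i₀ ≤ i → (x i : PowerSeries k) = (X : PowerSeries k) ^ (a i) := by
    intro i h
    simp only [hxdef, dif_pos h]
  have horder : ∀ i, (x i : PowerSeries k).order = (a i : ℕ∞) := by
    intro i
    by_cases h : i₀ ≤ i
    · rw [hmono i h]; exact order_X_pow _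
    · simp only [hxdef, dif_neg h]; exact (Classical.choose_spec (hax i)).2
  have hxm : ∀ i, x i ∈ mIdeal R := by
    intro i
    by_cases h : i₀ ≤ i
    · rw [hmk, hmono i h, map_pow, constantCoeff_X, zero_pow (by have := hca i h; omega)]
    · simp only [hxdef, dif_neg h]; exact (Classical.choose_spec (hax i)).1
  set N := Ideal.span (Set.range x) with hN
  have hNle : N ≤ mIdeal R := Ideal.span_le.mpr (by rintro _ ⟨i, rfl⟩; exact hxm i)
  have hn : 0 < n := i₀.pos
  set lst : Fin n := ⟨n - 1, Nat.sub_lt hn one_pos⟩ with hlst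
  have hilst : i₀ ≤ lst := by
    show (i₀ : ℕ) ≤ n - 1
    have := i₀.isLt
    omega
  set B : ℕ := a lst + c with hB
  -- every element of R of order ≥ B lies in N
  have hBN : HKorderIdeal R B ≤ N := by
    intro g hg
    rw [HKmem_orderIdeal] at hg
    obtain ⟨h, hh⟩ : (X : PowerSeries k) ^ (a lst) ∣ (g : PowerSeries k) := by
      rw [X_pow_dvd_iff]
      intro m hm
      refine coeff_of_lt_order m (lt_of_lt_of_le ?_ hg)
      exact_mod_cast lt_of_lt_of_le hm (Nat.le_add_right _ _)
    have hgo : (g : PowerSeries k).order = (a lst : ℕ∞) + h.order := by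
      rw [hh, order_mul, order_X_pow]
    have hco : (c : ℕ∞) ≤ h.order := by
      have h2 : (a lst : ℕ∞) + (c : ℕ∞) ≤ (a lst : ℕ∞) + h.order := by
        rw [← hgo]
        exact_mod_cast hg
      exact (WithTop.add_le_add_iff_left (by exact_mod_cast WithTop.coe_ne_top)).mp h2
    have hhR : h ∈ R := HKmem_of_le_order hcond hco
    have hgx : g = x lst * ⟨h, hhR⟩ := by
      apply Subtype.ext
      show (g : PowerSeries k) = (x lst : PowerSeries k) * h
      rw [hmono lst hilst, hh]
    rw [hgx]
    exact Ideal.mul_mem_right _ _ (Ideal.subset_span ⟨lst, rfl⟩)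
  -- key downward induction: 𝔪 ≤ N ⊔ 𝔪²
  have key : ∀ d : ℕ, ∀ g : R, g ∈ mIdeal R →
      (B : ℕ∞) ≤ (g : PowerSeries k).order + (d : ℕ∞) → g ∈ N ⊔ (mIdeal R)^2 := by
    intro d
    induction d with
    | zero =>
      intro g _ hBo
      rw [Nat.cast_zero, add_zero] at hBo
      exact Submodule.mem_sup_left (hBN hBo)
    | succ d ih =>
      intro g hg hBo
      by_cases hbig : (B : ℕ∞) ≤ (g : PowerSeries k).order
      · exact Submodule.mem_sup_left (hBN hbig)
      · push_neg at hbig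
        have hfin : (g : PowerSeries k).order ≠ ⊤ := by
          intro htop
          rw [htop] at hbig
          exact (not_top_lt (hbig.trans_le le_top)).elim
        obtain ⟨m, hm⟩ : ∃ m : ℕ, (g : PowerSeries k).order = (m : ℕ∞) := by
          cases hcase : (g : PowerSeries k).order with
          | top => exact absurd hcase hfin
          | coe m => exact ⟨m, rfl⟩
        have hmv : m ∈ vset (mIdeal R) := ⟨g, hg, hm⟩
        obtain ⟨h, hhsup, hhm, hho⟩ :
            ∃ h : R, h ∈ N ⊔ (mIdeal R)^2 ∧ h ∈ mIdeal R ∧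
              (h : PowerSeries k).order = (m : ℕ∞) := by
          by_cases hsq : m ∈ vset ((mIdeal R)^2)
          · obtain ⟨h, hh2, hho⟩ := hsq
            exact ⟨h, Submodule.mem_sup_right hh2,
              Ideal.pow_le_self two_ne_zero hh2, hho⟩
          · have hrg : m ∈ Set.range a := by rw [← hS]; exact ⟨hmv, hsq⟩
            obtain ⟨i, rfl⟩ := hrg
            exact ⟨x i, Submodule.mem_sup_left (Ideal.subset_span ⟨i, rfl⟩),
              hxm i, horder i⟩
        have hcoh : (coeff m) (h : PowerSeries k) ≠ 0 := (order_eq_nat.mp hho).1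
        set lam : k := (coeff m) (g : PowerSeries k) / (coeff m) (h : PowerSeries k)
          with hlam
        set r : R := ⟨C lam, by rw [C_eq_algebraMap]; exact R.algebraMap_mem lam⟩ with hr
        set g' : R := g - r * h with hg'
        have hg'm : g' ∈ mIdeal R := sub_mem hg (Ideal.mul_mem_left _ _ hhm)
        have hg'coe : (g' : PowerSeries k) = (g : PowerSeries k) - C lam * h := rfl
        have hg'o : ((m + 1 : ℕ) : ℕ∞) ≤ (g' : PowerSeries k).order := by
          apply nat_le_order
          intro i hi
          rw [hg'coe, map_sub, coeff_C_mul]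
          rcases lt_or_eq_of_le (Nat.lt_succ_iff.mp hi) with hlt | heq
          · rw [coeff_of_lt_order i (by rw [hm]; exact_mod_cast hlt),
              coeff_of_lt_order i (by rw [hho]; exact_mod_cast hlt), mul_zero, sub_zero]
          · subst heq
            rw [hlam, div_mul_cancel₀ _ hcoh, sub_self]
        have hstep : (B : ℕ∞) ≤ (g' : PowerSeries k).order + (d : ℕ∞) := by
          calc (B : ℕ∞) ≤ (g : PowerSeries k).order + ((d + 1 : ℕ) : ℕ∞) := hBo
          _ = ((m + 1 + d : ℕ) : ℕ∞) := by rw [hm]; push_cast; ring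
          _ = ((m + 1 : ℕ) : ℕ∞) + (d : ℕ∞) := by push_cast; ring
          _ ≤ (g' : PowerSeries k).order + (d : ℕ∞) := add_le_add_left hg'o _
        have hg'in := ih g' hg'm hstep
        have hgdec : g = g' + r * h := by rw [hg']; ring
        rw [hgdec]
        exact add_mem hg'in (Ideal.mul_mem_left _ _ hhsup)
  have hA : mIdeal R ≤ N ⊔ (mIdeal R)^2 := fun g hg => key B g hg le_add_self
  -- iterate: 𝔪 ≤ N ⊔ 𝔪^(2+j)
  have hA' : ∀ j : ℕ, mIdeal R ≤ N ⊔ (mIdeal R)^(2+j) := by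
    intro j
    induction j with
    | zero => exact hA
    | succ j ih =>
      have h2 : (mIdeal R)^(2+j) ≤ N ⊔ (mIdeal R)^(2+(j+1)) := by
        have hsplit : (mIdeal R)^(2+j) = (mIdeal R)^(1+j) * mIdeal R := by
          rw [show 2+j = (1+j)+1 from by omega, pow_succ]
        rw [hsplit]
        calc (mIdeal R)^(1+j) * mIdeal R
            ≤ (mIdeal R)^(1+j) * (N ⊔ (mIdeal R)^(2+j)) := Ideal.mul_mono_right ih
        _ = (mIdeal R)^(1+j) * N ⊔ (mIdeal R)^(1+j) * (mIdeal R)^(2+j) :=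
            Ideal.mul_sup _ _ _
        _ ≤ N ⊔ (mIdeal R)^(2+(j+1)) := by
            apply sup_le_sup Ideal.mul_le_right
            rw [← pow_add]
            exact Ideal.pow_le_pow_right (by omega)
      calc mIdeal R ≤ N ⊔ (mIdeal R)^(2+j) := ih
      _ ≤ N ⊔ (N ⊔ (mIdeal R)^(2+(j+1))) := sup_le_sup_left h2 N
      _ = N ⊔ (mIdeal R)^(2+(j+1)) := by rw [← sup_assoc, sup_idem]
  have hm1 : mIdeal R ≤ HKorderIdeal R 1 := by
    intro g hg
    rw [HKmem_orderIdeal]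
    apply nat_le_order
    intro i hi
    have : i = 0 := Nat.lt_one_iff.mp hi
    subst this
    rw [coeff_zero_eq_constantCoeff]
    exact (hmk g).mp hg
  have hpowN : (mIdeal R)^(2+B) ≤ N := by
    calc (mIdeal R)^(2+B) ≤ (HKorderIdeal R 1)^(2+B) := Ideal.pow_right_mono hm1 _
    _ ≤ HKorderIdeal R (2+B) := HKpow_le R _
    _ ≤ HKorderIdeal R B := by
        intro g hg
        rw [HKmem_orderIdeal] at *
        exact le_trans (by exact_mod_cast Nat.le_add_left B 2) hg
    _ ≤ N := hBN
  have hfinal : mIdeal R ≤ N := by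
    calc mIdeal R ≤ N ⊔ (mIdeal R)^(2+B) := hA' B
    _ ≤ N ⊔ N := sup_le_sup_left hpowN N
    _ = N := sup_idem _
  exact ⟨x, horder, le_antisymm hNle hfinal, hmono⟩
end

section
/- Let R ⊆ k[[t]] be a k-subalgebra with 𝔪 = R ∩ t·k[[t]], t^{c_R}·k[[t]] ⊆ R, Herzog–Kunz set {a₁ < … < a_n} = v(𝔪)\v(𝔪²), and Herzog–Kunz generators x₁,…,x_n (so v(xᵢ) = aᵢ). Let T_i = k[[x₁,…,x_i]] be the closed subalgebra generated by x₁,…,x_i. Then for each 1 ≤ i < n, a_{i+1} = min(V(R) \ V(T_i)). -/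
open PowerSeries

set_option maxHeartbeats 1000000
set_option synthInstance.maxHeartbeats 400000

lemma hk_order_neg {k : Type*} [Field k] (f : PowerSeries k) : (-f).order = f.order := by
  have h : (-f) = (-1 : PowerSeries k) * f := by ring
  have hu : IsUnit (-1 : PowerSeries k) := IsUnit.neg isUnit_one
  rw [h, order_mul, order_zero_of_unit hu, zero_add]

/-- order of a `k`-linear combination of series with strictly increasing orders. -/
lemma hk_order_sum {k : Type*} [Field k] {m : ℕ} (y : Fin m → PowerSeries k)
    (b : Fin m → ℕ) (hb : StrictMono b) (hy : ∀ j, (y j).order = (b j : ℕ∞))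
    (co : Fin m → k) :
    (∑ j, co j • y j) = 0 ∨ ∃ j, (∑ j, co j • y j).order = (b j : ℕ∞) := by
  classical
  by_cases h : ∀ j, co j = 0
  · left; simp [h]
  · right
    push_neg at h
    set s : Finset (Fin m) := Finset.univ.filter (fun j => co j ≠ 0) with hs
    have hsne : s.Nonempty := by
      obtain ⟨j, hj⟩ := h
      exact ⟨j, by simp [hs, hj]⟩
    set j₀ := s.min' hsne with hj₀
    have hj₀s : j₀ ∈ s := s.min'_mem hsne
    have hco₀ : co j₀ ≠ 0 := by simpa [hs] using hj₀s
    refine ⟨j₀, ?_⟩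
    have hcoeff : ∀ (e : ℕ) (j : Fin m), e < b j → (coeff e) (y j) = 0 := by
      intro e j he
      exact coeff_of_lt_order e (by rw [hy j]; exact_mod_cast he)
    rw [order_eq_nat]
    constructor
    · rw [map_sum]
      have hsum : ∑ j, (coeff (b j₀)) (co j • y j) = co j₀ * (coeff (b j₀)) (y j₀) := by
        rw [Finset.sum_eq_single j₀]
        · rw [map_smul, smul_eq_mul]
        · intro j _ hne
          by_cases hcj : co j = 0
          · simp [hcj]
          · have hjs : j ∈ s := by simp [hs, hcj]
            have : j₀ < j := lt_of_le_of_ne (s.min'_le j hjs) (Ne.symm hne)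
            rw [map_smul, smul_eq_mul, hcoeff (b j₀) j (hb this), mul_zero]
        · intro hj; exact absurd (Finset.mem_univ j₀) hj
      rw [hsum]
      have hne : (coeff (b j₀)) (y j₀) ≠ 0 := by
        have := order_eq_nat.mp (hy j₀)
        exact this.1
      exact mul_ne_zero hco₀ hne
    · intro e he
      rw [map_sum]
      refine Finset.sum_eq_zero ?_
      intro j _
      by_cases hcj : co j = 0
      · simp [hcj]
      · have hjs : j ∈ s := by simp [hs, hcj]
        have hle : b j₀ ≤ b j := hb.monotone (s.min'_le j hjs)
        rw [map_smul, smul_eq_mul, hcoeff e j (lt_of_lt_of_le he hle), mul_zero]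

/-- decomposition of adjoin elements: constant + linear part + 𝔪²-part. -/
lemma hk_adjoin_decomp {k : Type*} [Field k] {R : Subalgebra k (PowerSeries k)}
    (Sr : Set R) (hSr : ∀ r ∈ Sr, r ∈ mIdeal R) (p : R) (hp : p ∈ Algebra.adjoin k Sr) :
    ∃ (cc : k) (ℓ : R), ℓ ∈ Submodule.span k Sr ∧ ∃ q ∈ (mIdeal R) ^ 2,
      p = algebraMap k R cc + ℓ + q := by
  have hspan : ∀ ℓ ∈ Submodule.span k Sr, ℓ ∈ mIdeal R := by
    intro ℓ hℓ
    have : Submodule.span k Sr ≤ (mIdeal R).restrictScalars k :=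
      Submodule.span_le.mpr (fun r hr => hSr r hr)
    exact this hℓ
  induction hp using Algebra.adjoin_induction with
  | mem y hy => exact ⟨0, y, Submodule.subset_span hy, 0, zero_mem _, by simp⟩
  | algebraMap r => exact ⟨r, 0, zero_mem _, 0, zero_mem _, by simp⟩
  | add p₁ p₂ _ _ ih₁ ih₂ =>
    obtain ⟨c₁, ℓ₁, hℓ₁, q₁, hq₁, he₁⟩ := ih₁
    obtain ⟨c₂, ℓ₂, hℓ₂, q₂, hq₂, he₂⟩ := ih₂
    exact ⟨c₁ + c₂, ℓ₁ + ℓ₂, add_mem hℓ₁ hℓ₂, q₁ + q₂, add_mem hq₁ hq₂, by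
      rw [he₁, he₂, map_add]; ring⟩
  | mul p₁ p₂ _ _ ih₁ ih₂ =>
    obtain ⟨c₁, ℓ₁, hℓ₁, q₁, hq₁, he₁⟩ := ih₁
    obtain ⟨c₂, ℓ₂, hℓ₂, q₂, hq₂, he₂⟩ := ih₂
    have hm2 : (mIdeal R) ^ 2 = mIdeal R * mIdeal R := sq (mIdeal R)
    refine ⟨c₁ * c₂, c₁ • ℓ₂ + c₂ • ℓ₁,
      add_mem (Submodule.smul_mem _ _ hℓ₂) (Submodule.smul_mem _ _ hℓ₁),
      algebraMap k R c₁ * q₂ + algebraMap k R c₂ * q₁ + ℓ₁ * ℓ₂ + ℓ₁ * q₂ + q₁ * ℓ₂ + q₁ * q₂,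
      ?_, ?_⟩
    · refine add_mem (add_mem (add_mem (add_mem (add_mem
        (Ideal.mul_mem_left _ _ hq₂) (Ideal.mul_mem_left _ _ hq₁)) ?_)
        (Ideal.mul_mem_left _ _ hq₂)) (Ideal.mul_mem_right _ _ hq₁))
        (Ideal.mul_mem_left _ _ hq₂)
      rw [hm2]
      exact Ideal.mul_mem_mul (hspan _ hℓ₁) (hspan _ hℓ₂)
    · rw [he₁, he₂, map_mul, Algebra.smul_def, Algebra.smul_def]
      ring

/-- with Herzog–Kunz generators `x₁,…,x_n` (`v(xᵢ) = aᵢ`) and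
`T_i = k[[x₁,…,x_i]]` (the `t`-adic closure of the `k`-algebra generated by `x₁,…,xᵢ`,
i.e. the image of a power series ring), for each `i < n` one has
`a_{i+1} = min (V(R) \ V(T_i))`. -/
theorem next_herzogKunz_value_eq_min {k : Type*} [Field k]
    (R : Subalgebra k (PowerSeries k)) (c : ℕ) (hc1 : 1 ≤ c)
    (hcond : ∀ f : PowerSeries k, (X : PowerSeries k) ^ c * f ∈ R)
    (n : ℕ) (a : Fin n → ℕ) (ha : StrictMono a)
    (hS : vset (mIdeal R) \ vset ((mIdeal R) ^ 2) = Set.range a)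
    (x : Fin n → R) (hxm : ∀ i, x i ∈ mIdeal R)
    (hxv : ∀ i, (x i : PowerSeries k).order = (a i : ℕ∞)) :
    ∀ (i : ℕ) (hi : i + 1 < n) (T : Set (PowerSeries k)),
      (∀ g : PowerSeries k, g ∈ T ↔ ∀ d : ℕ, ∃ p ∈ Algebra.adjoin k
          {y : PowerSeries k | ∃ j : Fin n, j.val ≤ i ∧ y = (x j : PowerSeries k)},
          (d : ℕ∞) < (g - p).order) →
      IsLeast {w : ℕ | (∃ f ∈ R, f.order = (w : ℕ∞)) ∧ ¬ ∃ g ∈ T, g.order = (w : ℕ∞)}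
        (a ⟨i + 1, hi⟩) := by
  intro i hi T hT
  classical
  set Sset : Set (PowerSeries k) :=
    {y : PowerSeries k | ∃ j : Fin n, j.val ≤ i ∧ y = (x j : PowerSeries k)} with hSset
  -- basic facts about the maximal ideal
  have hm0 : ∀ f : R, f ∈ mIdeal R → (constantCoeff) (f : PowerSeries k) = 0 := by
    intro f hf
    simpa [mIdeal, RingHom.mem_ker] using hf
  have hm1 : ∀ f : R, f ∈ mIdeal R → (1 : ℕ∞) ≤ (f : PowerSeries k).order := by
    intro f hf
    have := nat_le_order (f : PowerSeries k) 1 (by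
      intro m hm
      interval_cases m
      rw [coeff_zero_eq_constantCoeff]
      exact hm0 f hf)
    exact_mod_cast this
  have hmem_m : ∀ (f : PowerSeries k) (hfR : f ∈ R), (1 : ℕ∞) ≤ f.order →
      (⟨f, hfR⟩ : R) ∈ mIdeal R := by
    intro f hfR hord
    have h0 : (coeff 0) f = 0 :=
      coeff_of_lt_order 0 (lt_of_lt_of_le (by norm_num) hord)
    simp only [mIdeal, RingHom.mem_ker, RingHom.comp_apply]
    rw [← coeff_zero_eq_constantCoeff]
    exact h0
  have haj1 : ∀ j : Fin n, 1 ≤ a j := by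
    intro j
    have := hm1 (x j) (hxm j)
    rw [hxv j] at this
    exact_mod_cast this
  -- the adjoin is contained in R and in T
  have hSsetR : Sset ⊆ (R : Set (PowerSeries k)) := by
    rintro y ⟨j, _, rfl⟩
    exact (x j).2
  have hAdjR : ∀ p ∈ Algebra.adjoin k Sset, p ∈ R := by
    intro p hp
    exact Algebra.adjoin_le hSsetR hp
  have hAdjT : ∀ p ∈ Algebra.adjoin k Sset, p ∈ T := by
    intro p hp
    rw [hT]
    intro d
    refine ⟨p, hp, ?_⟩
    simp [sub_self, order_zero]
  -- T is contained in R (uses the conductor)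
  have hTR : ∀ g ∈ T, g ∈ R := by
    intro g hg
    obtain ⟨p, hp, hord⟩ := (hT g).mp hg c
    have hdvd : (X : PowerSeries k) ^ c ∣ g - p := by
      rw [X_pow_dvd_iff]
      intro m hm
      exact coeff_of_lt_order m (lt_trans (by exact_mod_cast hm) hord)
    obtain ⟨h, hh⟩ := hdvd
    have : g = p + (X : PowerSeries k) ^ c * h := by rw [← hh]; ring
    rw [this]
    exact add_mem (hAdjR p hp) (hcond h)
  -- T is closed under addition, multiplication and scalar multiplication
  have hTadd : ∀ g₁ g₂, g₁ ∈ T → g₂ ∈ T → g₁ + g₂ ∈ T := by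
    intro g₁ g₂ h₁ h₂
    rw [hT]
    intro d
    obtain ⟨p₁, hp₁, ho₁⟩ := (hT g₁).mp h₁ d
    obtain ⟨p₂, hp₂, ho₂⟩ := (hT g₂).mp h₂ d
    refine ⟨p₁ + p₂, add_mem hp₁ hp₂, ?_⟩
    have he : g₁ + g₂ - (p₁ + p₂) = (g₁ - p₁) + (g₂ - p₂) := by ring
    rw [he]
    exact lt_of_lt_of_le (lt_min ho₁ ho₂) (min_order_le_order_add _ _)
  have hTmul : ∀ g₁ g₂, g₁ ∈ T → g₂ ∈ T → g₁ * g₂ ∈ T := by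
    intro g₁ g₂ h₁ h₂
    rw [hT]
    intro d
    obtain ⟨p₁, hp₁, ho₁⟩ := (hT g₁).mp h₁ d
    obtain ⟨p₂, hp₂, ho₂⟩ := (hT g₂).mp h₂ d
    refine ⟨p₁ * p₂, mul_mem hp₁ hp₂, ?_⟩
    have he : g₁ * g₂ - p₁ * p₂ = (g₁ - p₁) * g₂ + p₁ * (g₂ - p₂) := by ring
    rw [he]
    refine lt_of_lt_of_le (lt_min ?_ ?_) (min_order_le_order_add _ _)
    · rw [order_mul]
      exact lt_of_lt_of_le ho₁ le_self_add
    · rw [order_mul]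
      exact lt_of_lt_of_le ho₂ le_add_self
  have hTsmul : ∀ (α : k) (g : PowerSeries k), g ∈ T → α • g ∈ T := by
    intro α g hg
    rw [smul_eq_C_mul]
    refine hTmul _ _ (hAdjT _ ?_) hg
    have : (PowerSeries.C α) = algebraMap k (PowerSeries k) α := by
      simp [PowerSeries.algebraMap_apply]
    rw [this]
    exact Subalgebra.algebraMap_mem _ α
  -- the key approximation lemma
  have approx : ∀ d : ℕ, d ≤ a ⟨i + 1, hi⟩ → ∀ f : PowerSeries k, f ∈ R →
      ∃ g ∈ T, (d : ℕ∞) ≤ (f - g).order := by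
    intro d
    induction d with
    | zero =>
      intro _ f _
      exact ⟨0, hAdjT 0 (zero_mem _), by simp⟩
    | succ d IH =>
      intro hdA f hf
      obtain ⟨g₀, hg₀T, hg₀⟩ := IH (le_trans (Nat.le_succ d) hdA) f hf
      by_cases hcase : ((d + 1 : ℕ) : ℕ∞) ≤ (f - g₀).order
      · exact ⟨g₀, hg₀T, hcase⟩
      push_neg at hcase
      have hcase' : (f - g₀).order < (d : ℕ∞) + 1 := by exact_mod_cast hcase
      have hord : (f - g₀).order = (d : ℕ∞) :=
        le_antisymm ((ENat.lt_add_one_iff (by simp)).mp hcase') hg₀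
      have hf₀R : f - g₀ ∈ R := sub_mem hf (hTR g₀ hg₀T)
      -- it suffices to find y ∈ T approximating f - g₀ one order better
      suffices hy : ∃ y ∈ T, (d : ℕ∞) < ((f - g₀) - y).order by
        obtain ⟨y, hyT, hyo⟩ := hy
        refine ⟨g₀ + y, hTadd _ _ hg₀T hyT, ?_⟩
        have he : f - (g₀ + y) = (f - g₀) - y := by ring
        rw [he]
        have : ((d : ℕ∞) + 1) ≤ ((f - g₀) - y).order :=
          (ENat.add_one_le_iff (by simp)).mpr hyo
        exact_mod_cast this
      -- any z ∈ T of order exactly d can be rescaled to do the job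
      have hstep : ∀ z : PowerSeries k, z ∈ T → z.order = (d : ℕ∞) →
          ∃ y ∈ T, (d : ℕ∞) < ((f - g₀) - y).order := by
        intro z hzT hzo
        obtain ⟨hz1, hz2⟩ := order_eq_nat.mp hzo
        set α := (coeff d) (f - g₀) / (coeff d) z with hα
        refine ⟨α • z, hTsmul α z hzT, ?_⟩
        have hle : ((d + 1 : ℕ) : ℕ∞) ≤ ((f - g₀) - α • z).order := by
          apply nat_le_order
          intro m hm
          rcases Nat.lt_succ_iff_lt_or_eq.mp hm with hmd | rfl
          · rw [map_sub, map_smul, smul_eq_mul, hz2 m hmd, mul_zero, sub_zero]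
            exact coeff_of_lt_order m (by rw [hord]; exact_mod_cast hmd)
          · rw [map_sub, map_smul, smul_eq_mul, hα, div_mul_cancel₀ _ hz1, sub_self]
        have hlt : (d : ℕ∞) < ((d + 1 : ℕ) : ℕ∞) := by
          exact_mod_cast Nat.lt_succ_self d
        exact lt_of_lt_of_le hlt hle
      rcases Nat.eq_zero_or_pos d with hd0 | hd1
      · -- d = 0 : use a constant
        subst hd0
        refine hstep (PowerSeries.C ((constantCoeff) (f - g₀))) ?_ ?_
        · refine hAdjT _ ?_
          have : (PowerSeries.C ((constantCoeff) (f - g₀)))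
              = algebraMap k (PowerSeries k) ((constantCoeff) (f - g₀)) := by
            simp [PowerSeries.algebraMap_apply]
          rw [this]
          exact Subalgebra.algebraMap_mem _ _
        · have hne : (constantCoeff) (f - g₀) ≠ 0 := by
            have := (order_eq_nat.mp (by exact_mod_cast hord)).1
            rwa [coeff_zero_eq_constantCoeff] at this
          rw [order_eq_nat]
          refine ⟨by simpa using hne, by omega⟩
      · -- d ≥ 1
        have hd1' : (1 : ℕ∞) ≤ (f - g₀).order := by
          rw [hord]; exact_mod_cast hd1
        have hfm : (⟨f - g₀, hf₀R⟩ : R) ∈ mIdeal R := hmem_m _ _ hd1'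
        by_cases hda : ∃ j : Fin n, a j = d
        · obtain ⟨j, hj⟩ := hda
          have hji : j.val ≤ i := by
            have h1 : a j < a ⟨i + 1, hi⟩ := by
              rw [hj]; exact lt_of_lt_of_le (Nat.lt_succ_self d) hdA
            have h2 : j < (⟨i + 1, hi⟩ : Fin n) := ha.lt_iff_lt.mp h1
            exact Nat.lt_succ_iff.mp h2
          refine hstep (x j : PowerSeries k)
            (hAdjT _ (Algebra.subset_adjoin ⟨j, hji, rfl⟩)) ?_
          rw [hxv j, hj]
        · -- d lies in v(𝔪²)
          have hdm : d ∈ vset (mIdeal R) := ⟨⟨f - g₀, hf₀R⟩, hfm, hord⟩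
          have hdm2 : d ∈ vset ((mIdeal R) ^ 2) := by
            by_contra hno
            have hmem : d ∈ vset (mIdeal R) \ vset ((mIdeal R) ^ 2) := ⟨hdm, hno⟩
            rw [hS] at hmem
            obtain ⟨j, hj⟩ := hmem
            exact hda ⟨j, hj⟩
          obtain ⟨F, hF2, hFo⟩ := hdm2
          have hclaim : ∀ F' : R, F' ∈ (mIdeal R) ^ 2 →
              ∃ y ∈ T, (d : ℕ∞) < ((F' : PowerSeries k) - y).order := by
            intro F' hF'
            rw [sq] at hF'
            refine Submodule.mul_induction_on hF' ?_ ?_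
            · intro g hg h hh
              obtain ⟨G, hGT, hGo⟩ := IH (le_trans (Nat.le_succ d) hdA)
                (g : PowerSeries k) g.2
              obtain ⟨H, hHT, hHo⟩ := IH (le_trans (Nat.le_succ d) hdA)
                (h : PowerSeries k) h.2
              refine ⟨G * H, hTmul _ _ hGT hHT, ?_⟩
              have he : ((g * h : R) : PowerSeries k) - G * H
                  = ((g : PowerSeries k) - G) * (h : PowerSeries k)
                    + G * ((h : PowerSeries k) - H) := by
                push_cast
                ring
              have hG1 : (1 : ℕ∞) ≤ G.order := by
                have h0 : (coeff 0) G = 0 := by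
                  have ha1 : (coeff 0) ((g : PowerSeries k) - G) = 0 :=
                    coeff_of_lt_order 0 (lt_of_lt_of_le (by
                      exact_mod_cast Nat.pos_of_ne_zero (by omega)) hGo)
                  have ha2 : (coeff 0) (g : PowerSeries k) = 0 := by
                    rw [coeff_zero_eq_constantCoeff]; exact hm0 g hg
                  rw [map_sub, ha2, zero_sub, neg_eq_zero] at ha1
                  exact ha1
                have := nat_le_order G 1 (by
                  intro m hm; interval_cases m; exact h0)
                exact_mod_cast this
              rw [he]
              refine lt_of_lt_of_le (lt_min ?_ ?_) (min_order_le_order_add _ _)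
              · rw [order_mul]
                calc (d : ℕ∞) < (d : ℕ∞) + 1 := by
                      exact_mod_cast Nat.lt_succ_self d
                  _ ≤ ((g : PowerSeries k) - G).order + (h : PowerSeries k).order :=
                      add_le_add hGo (hm1 h hh)
              · rw [order_mul]
                calc (d : ℕ∞) < 1 + (d : ℕ∞) := by
                      rw [add_comm]; exact_mod_cast Nat.lt_succ_self d
                  _ ≤ G.order + ((h : PowerSeries k) - H).order :=
                      add_le_add hG1 hHo
            · intro F₁ F₂ h₁ h₂
              obtain ⟨y₁, hy₁T, hy₁⟩ := h₁
              obtain ⟨y₂, hy₂T, hy₂⟩ := h₂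
              refine ⟨y₁ + y₂, hTadd _ _ hy₁T hy₂T, ?_⟩
              have he : ((F₁ + F₂ : R) : PowerSeries k) - (y₁ + y₂)
                  = ((F₁ : PowerSeries k) - y₁) + ((F₂ : PowerSeries k) - y₂) := by
                push_cast
                ring
              rw [he]
              exact lt_of_lt_of_le (lt_min hy₁ hy₂) (min_order_le_order_add _ _)
          obtain ⟨y, hyT, hyo⟩ := hclaim F hF2
          have hyo' : y.order = (d : ℕ∞) := by
            have h1 : y = (F : PowerSeries k) + (-((F : PowerSeries k) - y)) := by ring
            have h2 : ((F : PowerSeries k)).order ≠ (-((F : PowerSeries k) - y)).order := by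
              rw [hk_order_neg, hFo]
              exact ne_of_lt hyo
            rw [h1, order_add_of_order_ne _ _ h2, hk_order_neg, hFo]
            exact min_eq_left (le_of_lt (by rw [← hFo]; rw [hFo]; exact hyo))
          exact hstep y hyT hyo'
  constructor
  · -- a_{i+1} belongs to the set
    constructor
    · exact ⟨(x ⟨i + 1, hi⟩ : PowerSeries k), (x ⟨i + 1, hi⟩).2, hxv _⟩
    · rintro ⟨g, hgT, hgo⟩
      obtain ⟨p, hpAdj, hord⟩ := (hT g).mp hgT (a ⟨i + 1, hi⟩)
      have hpo : p.order = ((a ⟨i + 1, hi⟩ : ℕ) : ℕ∞) := by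
        have h1 : p = g + (-(g - p)) := by ring
        have h2 : g.order ≠ (-(g - p)).order := by
          rw [hk_order_neg, hgo]
          exact ne_of_lt hord
        rw [h1, order_add_of_order_ne _ _ h2, hk_order_neg, hgo]
        exact min_eq_left (le_of_lt (by rw [← hgo]; rw [hgo]; exact hord))
      -- transfer to R
      set v : Fin (i + 1) → R := fun j => x (Fin.castLE (le_of_lt hi) j) with hv
      have hSset_eq : Sset = (R.val : R → PowerSeries k) '' (Set.range v) := by
        ext y
        constructor
        · rintro ⟨j, hji, rfl⟩
          refine ⟨v ⟨j.val, Nat.lt_succ_of_le hji⟩, Set.mem_range_self _, ?_⟩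
          simp [hv, Fin.castLE]
        · rintro ⟨r, ⟨j', rfl⟩, rfl⟩
          exact ⟨Fin.castLE (le_of_lt hi) j', Nat.lt_succ_iff.mp (j'.isLt), rfl⟩
      rw [hSset_eq, Algebra.adjoin_image] at hpAdj
      obtain ⟨p', hp'A, hp'e⟩ := hpAdj
      have hvm : ∀ r ∈ Set.range v, r ∈ mIdeal R := by
        rintro r ⟨j, rfl⟩
        exact hxm _
      obtain ⟨cc, ℓ, hℓ, q, hq, hdec⟩ := hk_adjoin_decomp _ hvm p' hp'A
      have hℓm : ℓ ∈ mIdeal R := by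
        have hle : Submodule.span k (Set.range v) ≤ (mIdeal R).restrictScalars k :=
          Submodule.span_le.mpr (fun r hr => hvm r hr)
        exact hle hℓ
      have hqm : q ∈ mIdeal R := Ideal.pow_le_self two_ne_zero hq
      have hdec' : p = PowerSeries.C cc + (ℓ : PowerSeries k) + (q : PowerSeries k) := by
        rw [← hp'e, hdec]
        have h1 : R.val (algebraMap k R cc) = algebraMap k (PowerSeries k) cc :=
          AlgHom.commutes R.val cc
        simp only [map_add, h1, PowerSeries.algebraMap_apply]
        simp
      have hA1 : (1 : ℕ∞) ≤ p.order := by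
        rw [hpo]
        exact_mod_cast haj1 ⟨i + 1, hi⟩
      have hcc : cc = 0 := by
        have h0 : (coeff 0) p = 0 :=
          coeff_of_lt_order 0 (lt_of_lt_of_le (by norm_num) hA1)
        rw [hdec'] at h0
        simp only [map_add, coeff_zero_eq_constantCoeff_apply, constantCoeff_C,
          hm0 ℓ hℓm, hm0 q hqm, add_zero] at h0
        exact h0
      have hdec'' : p = (ℓ : PowerSeries k) + (q : PowerSeries k) := by
        rw [hdec', hcc]
        simp
      obtain ⟨co, hco⟩ := (Submodule.mem_span_range_iff_exists_fun k).mp hℓ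
      have hcoe : (ℓ : PowerSeries k) = ∑ j, co j • ((v j : R) : PowerSeries k) := by
        rw [← hco]
        push_cast
        rfl
      have hb : StrictMono (fun j : Fin (i + 1) => a (Fin.castLE (le_of_lt hi) j)) :=
        ha.comp (Fin.strictMono_castLE _)
      have hres := hk_order_sum (fun j => ((v j : R) : PowerSeries k))
        (fun j => a (Fin.castLE (le_of_lt hi) j)) hb (fun j => hxv _) co
      rw [← hcoe] at hres
      have hrange_not : ∀ w ∈ Set.range a, w ∉ vset ((mIdeal R) ^ 2) := by
        intro w hw
        rw [← hS] at hw
        exact hw.2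
      have hAnot : (a ⟨i + 1, hi⟩ : ℕ) ∉ vset ((mIdeal R) ^ 2) :=
        hrange_not _ (Set.mem_range_self _)
      have hjne : ∀ j' : Fin (i + 1), a (Fin.castLE (le_of_lt hi) j') ≠ a ⟨i + 1, hi⟩ := by
        intro j' hctr
        have := ha.injective hctr
        have hval : (Fin.castLE (le_of_lt hi) j').val = i + 1 := by
          rw [this]
        have : j'.val < i + 1 := j'.isLt
        simp [Fin.castLE] at hval
        omega
      rcases hres with hℓ0 | ⟨j', hℓo⟩
      · -- linear part vanishes, so p has order in v(𝔪²)
        have hp : p = (q : PowerSeries k) := by rw [hdec'', hℓ0, zero_add]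
        exact hAnot ⟨q, hq, by rw [← hp]; exact hpo⟩
      · by_cases hq0 : (q : PowerSeries k) = 0
        · have hp : p = (ℓ : PowerSeries k) := by rw [hdec'', hq0, add_zero]
          refine hjne j' ?_
          have := hℓo.symm.trans (hp ▸ hpo)
          exact_mod_cast this
        · obtain ⟨e, he⟩ : ∃ e : ℕ, (q : PowerSeries k).order = (e : ℕ∞) := by
            have hfin : (q : PowerSeries k).order < ⊤ := order_finite_iff_ne_zero.mpr hq0
            cases hcaseq : (q : PowerSeries k).order with
            | top => rw [hcaseq] at hfin; exact absurd hfin (lt_irrefl _)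
            | coe e => exact ⟨e, rfl⟩
          have heA : e ∈ vset ((mIdeal R) ^ 2) := ⟨q, hq, he⟩
          have hne : ((ℓ : PowerSeries k)).order ≠ ((q : PowerSeries k)).order := by
            rw [hℓo, he]
            intro hctr
            have hctr' : a (Fin.castLE (le_of_lt hi) j') = e := by exact_mod_cast hctr
            exact hrange_not _ (Set.mem_range_self _) (hctr' ▸ heA)
          have hmin := order_add_of_order_ne _ _ hne
          rw [← hdec''] at hmin
          rw [hpo, hℓo, he] at hmin
          rcases min_cases ((a (Fin.castLE (le_of_lt hi) j') : ℕ∞)) ((e : ℕ∞)) with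
            ⟨hm, _⟩ | ⟨hm, _⟩
          · rw [hm] at hmin
            exact hjne j' (by exact_mod_cast hmin.symm)
          · rw [hm] at hmin
            have : e = (a ⟨i + 1, hi⟩ : ℕ) := by exact_mod_cast hmin.symm
            exact hAnot (this ▸ heA)
  · -- lower bound
    rintro w ⟨⟨f, hfR, hfo⟩, hwT⟩
    by_contra hlt
    push_neg at hlt
    obtain ⟨g, hgT, hgo⟩ := approx (a ⟨i + 1, hi⟩) le_rfl f hfR
    apply hwT
    refine ⟨g, hgT, ?_⟩
    have hwo : (w : ℕ∞) < (f - g).order :=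
      lt_of_lt_of_le (by exact_mod_cast hlt) hgo
    have h2 : f.order ≠ (-(f - g)).order := by
      rw [hk_order_neg, hfo]
      exact ne_of_lt hwo
    have h1 : g = f + (-(f - g)) := by ring
    rw [h1, order_add_of_order_ne _ _ h2, hk_order_neg, hfo]
    exact min_eq_left (le_of_lt hwo)
end

section
/- Let R ⊆ k[[t]] be a k-subalgebra with 𝔪 = R ∩ t·k[[t]], t^{c_R}·k[[t]] ⊆ R, Herzog–Kunz set {a₁ < … < a_n}, and Herzog–Kunz generators x₁,…,x_n. Fix l ∈ ℕ and let i₀ = max{i : aᵢ ≤ l} (assume a₁ ≤ l). Then every f ∈ R can be written as f = p + g where p is a polynomial in x₁,…,x_{i₀} with coefficients in k and g ∈ R satisfies g = 0 or v(g) ≥ l + 1. -/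
open PowerSeries

set_option synthInstance.maxHeartbeats 400000

lemma one_le_order_of_mem {k : Type*} [Field k] {R : Subalgebra k (PowerSeries k)} {f : R}
    (hf : f ∈ mIdeal R) : (1 : ℕ∞) ≤ (f : PowerSeries k).order := by
  refine le_trans (by norm_num) (nat_le_order _ 1 fun i hi => ?_)
  interval_cases i
  simpa [coeff_zero_eq_constantCoeff] using (mem_mIdeal_iff f).1 hf

/-- Leading-term cancellation: if `f` and `h` have the same finite order `d`,
then `f - λ h` has order `> d` for a suitable scalar `λ`. -/
lemma cancel_lead {k : Type*} [Field k] {R : Subalgebra k (PowerSeries k)} {f h : R} {d : ℕ}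
    (hf : (f : PowerSeries k).order = (d : ℕ∞)) (hh : (h : PowerSeries k).order = (d : ℕ∞)) :
    ((d + 1 : ℕ) : ℕ∞) ≤
      ((f - algebraMap k R (coeff d (f : PowerSeries k) / coeff d (h : PowerSeries k)) * h :
        R) : PowerSeries k).order := by
  have hco : coeff d (h : PowerSeries k) ≠ 0 := (order_eq_nat.1 hh).1
  refine nat_le_order _ _ fun i hi => ?_
  have hcoe : ((f - algebraMap k R (coeff d (f : PowerSeries k) / coeff d (h : PowerSeries k))
      * h : R) : PowerSeries k)
      = (f : PowerSeries k) - C (coeff d (f : PowerSeries k) / coeff d (h : PowerSeries k))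
        * (h : PowerSeries k) := by
    push_cast [C_eq_algebraMap]
    rfl
  rw [hcoe, map_sub, coeff_C_mul]
  rcases lt_or_eq_of_le (Nat.lt_succ_iff.1 hi) with hlt | rfl
  · rw [coeff_of_lt_order i (by rw [hf]; exact_mod_cast hlt),
      coeff_of_lt_order i (by rw [hh]; exact_mod_cast hlt), mul_zero, sub_zero]
  · field_simp
    simp

lemma order_add_of_le {k : Type*} [Field k] {R : Subalgebra k (PowerSeries k)} {g1 g2 : R}
    {N : ℕ∞} (h1 : N ≤ (g1 : PowerSeries k).order) (h2 : N ≤ (g2 : PowerSeries k).order) :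
    N ≤ ((g1 + g2 : R) : PowerSeries k).order := by
  have := min_order_le_order_add (g1 : PowerSeries k) (g2 : PowerSeries k)
  push_cast
  exact le_trans (le_min h1 h2) this

set_option maxHeartbeats 1000000 in
theorem key_lemma {k : Type*} [Field k]
    (R : Subalgebra k (PowerSeries k))
    (n : ℕ) (a : Fin n → ℕ)
    (hS : vset (mIdeal R) \ vset ((mIdeal R) ^ 2) = Set.range a)
    (x : Fin n → R) (hxm : ∀ i, x i ∈ mIdeal R)
    (hxv : ∀ i, (x i : PowerSeries k).order = (a i : ℕ∞)) :
    ∀ l : ℕ, ∀ f : R, f ∈ mIdeal R →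
      ∃ p g : R, p ∈ Algebra.adjoin k {y : R | ∃ j : Fin n, a j ≤ l ∧ y = x j} ∧
        p ∈ mIdeal R ∧ f = p + g ∧ ((l + 1 : ℕ) : ℕ∞) ≤ (g : PowerSeries k).order := by
  intro l
  induction l using Nat.strong_induction_on with
  | _ l IH =>
  -- decomposition of elements of 𝔪²
  have hB : ∀ h' : R, h' ∈ (mIdeal R) ^ 2 → 1 ≤ l →
      ∃ p g : R, p ∈ Algebra.adjoin k {y : R | ∃ j : Fin n, a j ≤ l ∧ y = x j} ∧
        p ∈ mIdeal R ∧ h' = p + g ∧ ((l + 1 : ℕ) : ℕ∞) ≤ (g : PowerSeries k).order := by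
    intro h' hh' hl1
    rw [pow_two] at hh'
    refine Submodule.mul_induction_on hh' (fun u hu w hw => ?_) (fun u w hu hw => ?_)
    ·
      obtain ⟨pu, gu, hpu, hpum, hue, hgu⟩ := IH (l - 1) (by omega) u hu
      obtain ⟨pw, gw, hpw, hpwm, hwe, hgw⟩ := IH (l - 1) (by omega) w hw
      have hmono : Algebra.adjoin k {y : R | ∃ j : Fin n, a j ≤ l - 1 ∧ y = x j} ≤
          Algebra.adjoin k {y : R | ∃ j : Fin n, a j ≤ l ∧ y = x j} := by
        apply Algebra.adjoin_mono
        rintro y ⟨j, hj, rfl⟩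
        exact ⟨j, by omega, rfl⟩
      have hll : ((l - 1 + 1 : ℕ) : ℕ∞) = (l : ℕ∞) := by
        norm_cast; omega
      rw [hll] at hgu hgw
      refine ⟨pu * pw, pu * gw + gu * w, Subalgebra.mul_mem _ (hmono hpu) (hmono hpw),
        Ideal.mul_mem_right _ _ hpum, by rw [hue, hwe]; ring, ?_⟩
      have h1 : ((l + 1 : ℕ) : ℕ∞) ≤ ((pu * gw : R) : PowerSeries k).order := by
        push_cast
        rw [order_mul]
        calc ((l : ℕ∞) + 1) = 1 + (l : ℕ∞) := by rw [add_comm]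
        _ ≤ _ := add_le_add (one_le_order_of_mem hpum) hgw
      have h2 : ((l + 1 : ℕ) : ℕ∞) ≤ ((gu * w : R) : PowerSeries k).order := by
        push_cast
        rw [order_mul]
        exact add_le_add hgu (one_le_order_of_mem hw)
      exact order_add_of_le h1 h2
    · obtain ⟨pu, gu, hpu, hpum, hue, hgu⟩ := hu
      obtain ⟨pw, gw, hpw, hpwm, hwe, hgw⟩ := hw
      refine ⟨pu + pw, gu + gw, Subalgebra.add_mem _ hpu hpw, Ideal.add_mem _ hpum hpwm,
        by rw [hue, hwe]; ring, ?_⟩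
      exact order_add_of_le hgu hgw
  suffices H : ∀ m : ℕ, ∀ f : R, f ∈ mIdeal R →
      ((l + 1 - m : ℕ) : ℕ∞) ≤ (f : PowerSeries k).order →
      ∃ p g : R, p ∈ Algebra.adjoin k {y : R | ∃ j : Fin n, a j ≤ l ∧ y = x j} ∧
        p ∈ mIdeal R ∧ f = p + g ∧ ((l + 1 : ℕ) : ℕ∞) ≤ (g : PowerSeries k).order by
    intro f hf
    exact H (l + 1) f hf (by simpa using le_trans (by norm_num) (one_le_order_of_mem hf))
  intro m
  induction m with
  | zero =>
    intro f hf hord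
    exact ⟨0, f, Subalgebra.zero_mem _, Ideal.zero_mem _, (zero_add f).symm, by simpa using hord⟩
  | succ m IHm =>
    intro f hf hord
    by_cases hlm : l ≤ m
    · refine IHm f hf (le_trans ?_ (one_le_order_of_mem hf))
      exact_mod_cast Nat.cast_le.2 (by omega : l + 1 - m ≤ 1)
    push_neg at hlm
    set d := l - m with hd
    have hd1 : 1 ≤ d := by omega
    have hdl : d ≤ l := by omega
    have hdm : l + 1 - (m + 1) = d := by omega
    have hdm' : l + 1 - m = d + 1 := by omega
    rw [hdm] at hord
    by_cases h2 : ((d + 1 : ℕ) : ℕ∞) ≤ (f : PowerSeries k).order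
    · exact IHm f hf (by rw [hdm']; exact h2)
    -- order f = d exactly
    have hfd : (f : PowerSeries k).order = (d : ℕ∞) := by
      push_neg at h2
      have h2' : (f : PowerSeries k).order < ((d : ℕ) : ℕ∞) + 1 := by
        exact_mod_cast h2
      exact le_antisymm (Order.le_of_lt_add_one h2') hord
    have hdvm : (d : ℕ) ∈ vset (mIdeal R) := ⟨f, hf, hfd⟩
    by_cases hr : (d : ℕ) ∈ Set.range a
    · -- case d = a j
      obtain ⟨j, hj⟩ := hr
      have hjl : a j ≤ l := by omega
      set lam := algebraMap k R (coeff d (f : PowerSeries k) / coeff d ((x j : R) : PowerSeries k))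
      have hxo : ((x j : R) : PowerSeries k).order = (d : ℕ∞) := by rw [hxv j, hj]
      have hcan := cancel_lead hfd hxo
      have hmem : f - lam * x j ∈ mIdeal R :=
        Ideal.sub_mem _ hf (Ideal.mul_mem_left _ _ (hxm j))
      obtain ⟨p, g, hp, hpm, he, hg⟩ := IHm (f - lam * x j) hmem (by rw [hdm']; exact hcan)
      refine ⟨lam * x j + p, g, ?_, ?_, by rw [add_assoc, ← he]; ring, hg⟩
      · refine Subalgebra.add_mem _ (Subalgebra.mul_mem _ (Subalgebra.algebraMap_mem _ _) ?_) hp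
        exact Algebra.subset_adjoin ⟨j, hjl, rfl⟩
      · exact Ideal.add_mem _ (Ideal.mul_mem_left _ _ (hxm j)) hpm
    · -- case d ∈ v(𝔪²)
      have hdv2 : (d : ℕ) ∈ vset ((mIdeal R) ^ 2) := by
        by_contra hc
        exact hr (hS ▸ Set.mem_diff_of_mem hdvm hc)
      obtain ⟨h, hh2, hho⟩ := hdv2
      set lam := algebraMap k R (coeff d (f : PowerSeries k) / coeff d ((h : R) : PowerSeries k))
      have hcan := cancel_lead hfd hho
      have hlh2 : lam * h ∈ (mIdeal R) ^ 2 := Ideal.mul_mem_left _ _ hh2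
      have hhm : h ∈ mIdeal R := (Ideal.pow_le_self (by norm_num)) hh2
      have hmem : f - lam * h ∈ mIdeal R :=
        Ideal.sub_mem _ hf (Ideal.mul_mem_left _ _ hhm)
      obtain ⟨p1, g1, hp1, hp1m, he1, hg1⟩ := hB (lam * h) hlh2 (by omega)
      obtain ⟨p2, g2, hp2, hp2m, he2, hg2⟩ := IHm (f - lam * h) hmem (by rw [hdm']; exact hcan)
      refine ⟨p1 + p2, g1 + g2, Subalgebra.add_mem _ hp1 hp2, Ideal.add_mem _ hp1m hp2m, ?_, ?_⟩
      · linear_combination he1 + he2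
      · exact order_add_of_le hg1 hg2

/-- with Herzog–Kunz generators `x₁,…,x_n`, `l ∈ ℕ`, and
`i₀ = max{i : aᵢ ≤ l}` (assuming `a₁ ≤ l`), every `f ∈ R` may be written as `f = p + g`
with `p` a polynomial in `x₁,…,x_{i₀}` over `k` and `g = 0` or `v(g) ≥ l + 1`. -/
theorem split_polynomial_high_order {k : Type*} [Field k]
    (R : Subalgebra k (PowerSeries k)) (c : ℕ) (hc1 : 1 ≤ c)
    (hcond : ∀ f : PowerSeries k, (X : PowerSeries k) ^ c * f ∈ R)
    (n : ℕ) (a : Fin n → ℕ) (ha : StrictMono a)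
    (hS : vset (mIdeal R) \ vset ((mIdeal R) ^ 2) = Set.range a)
    (x : Fin n → R) (hxm : ∀ i, x i ∈ mIdeal R)
    (hxv : ∀ i, (x i : PowerSeries k).order = (a i : ℕ∞))
    (l : ℕ) (i₀ : Fin n) (hi₀l : a i₀ ≤ l) (hi₀max : ∀ j : Fin n, a j ≤ l → j ≤ i₀) :
    ∀ f : R, ∃ p g : R,
      p ∈ Algebra.adjoin k {y : R | ∃ j : Fin n, j ≤ i₀ ∧ y = x j} ∧
      f = p + g ∧
      (g = 0 ∨ ((l + 1 : ℕ) : ℕ∞) ≤ (g : PowerSeries k).order) := by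
  intro f
  have hsets : {y : R | ∃ j : Fin n, a j ≤ l ∧ y = x j}
      = {y : R | ∃ j : Fin n, j ≤ i₀ ∧ y = x j} := by
    ext y
    constructor
    · rintro ⟨j, hj, rfl⟩; exact ⟨j, hi₀max j hj, rfl⟩
    · rintro ⟨j, hj, rfl⟩; exact ⟨j, le_trans (ha.monotone hj) hi₀l, rfl⟩
  set c0 := constantCoeff (f : PowerSeries k)
  have hf0 : f - algebraMap k R c0 ∈ mIdeal R := by
    rw [mem_mIdeal_iff]
    push_cast
    rw [map_sub, ← C_eq_algebraMap, constantCoeff_C, sub_self]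
  obtain ⟨p, g, hp, hpm, he, hg⟩ := key_lemma R n a hS x hxm hxv l (f - algebraMap k R c0) hf0
  refine ⟨algebraMap k R c0 + p, g, ?_, ?_, Or.inr hg⟩
  · rw [← hsets] at *
    exact Subalgebra.add_mem _ (Subalgebra.algebraMap_mem _ _) hp
  · have : f = algebraMap k R c0 + (f - algebraMap k R c0) := by ring
    rw [this, he]; ring
end

section
/- Let R ⊆ k[[t]] be a k-subalgebra with 𝔪 = R ∩ t·k[[t]], t^{c_R}·k[[t]] ⊆ R, and let a_n = max(v(𝔪)\v(𝔪²)). Suppose y₁,…,y_n generate 𝔪 (as an R-ideal), and ỹ₁,…,ỹ_n ∈ R satisfy yᵢ − ỹᵢ ∈ t^{a_n+1}·k[[t]] for all i. Then ỹ₁,…,ỹ_n also generate 𝔪. -/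
open PowerSeries

set_option maxHeartbeats 1000000
set_option synthInstance.maxHeartbeats 200000

lemma isUnit_one_add {k : Type*} [Field k] {R : Subalgebra k (PowerSeries k)} {c : ℕ}
    (hc1 : 1 ≤ c) (hcond : ∀ f : PowerSeries k, (X : PowerSeries k) ^ c * f ∈ R)
    (u : R) (hu : u ∈ mIdeal R) : IsUnit (1 + u) := by
  have hu0 : constantCoeff (u : PowerSeries k) = 0 := (mem_mIdeal_iff u).1 hu
  set w : PowerSeries k := 1 + (u : PowerSeries k) with hw
  have hw0 : constantCoeff w ≠ 0 := by simp [hw, hu0]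
  have hmul : w * w⁻¹ = 1 := PowerSeries.mul_inv_cancel w hw0
  -- X^c divides (-u)^c
  have hXdvd : (X : PowerSeries k) ^ c ∣ (-(u : PowerSeries k)) ^ c :=
    pow_dvd_pow_of_dvd (X_dvd_iff.2 (by simp [hu0])) c
  obtain ⟨h, hh⟩ := hXdvd
  -- geometric identity
  have hgeom : w * (∑ i ∈ Finset.range c, (-(u : PowerSeries k)) ^ i)
      = 1 - (-(u : PowerSeries k)) ^ c := by
    have := geom_sum_mul (-(u : PowerSeries k)) c
    have h2 : (-(u : PowerSeries k) - 1) = -w := by ring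
    rw [h2] at this
    have := congrArg Neg.neg this
    rw [mul_neg, neg_neg] at this
    rw [mul_comm]
    linear_combination this
  have hv : w⁻¹ = (∑ i ∈ Finset.range c, (-(u : PowerSeries k)) ^ i)
      + (X : PowerSeries k) ^ c * (h * w⁻¹) := by
    have : w⁻¹ * (w * (∑ i ∈ Finset.range c, (-(u : PowerSeries k)) ^ i))
        = w⁻¹ * (1 - (-(u : PowerSeries k)) ^ c) := by rw [hgeom]
    rw [← mul_assoc, mul_comm w⁻¹ w, hmul, one_mul, mul_sub, mul_one, hh] at this
    rw [this]; ring
  have hvR : w⁻¹ ∈ R := by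
    rw [hv]
    exact add_mem (Subalgebra.sum_mem R (fun i _ => pow_mem (neg_mem u.2) i)) (hcond _)
  refine IsUnit.of_mul_eq_one (a := 1 + u) ⟨w⁻¹, hvR⟩ ?_
  refine Subtype.ext ?_
  push_cast
  exact hmul

lemma mIdeal_le_jacobson {k : Type*} [Field k] {R : Subalgebra k (PowerSeries k)} {c : ℕ}
    (hc1 : 1 ≤ c) (hcond : ∀ f : PowerSeries k, (X : PowerSeries k) ^ c * f ∈ R) :
    mIdeal R ≤ Ideal.jacobson ⊥ := by
  intro x hx
  rw [Ideal.mem_jacobson_bot]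
  intro y
  have : x * y ∈ mIdeal R := Ideal.mul_mem_right y _ hx
  have := isUnit_one_add hc1 hcond (x * y) this
  rwa [add_comm] at this

lemma base_case {k : Type*} [Field k] {R : Subalgebra k (PowerSeries k)} {c : ℕ}
    (hc1 : 1 ≤ c) (hcond : ∀ f : PowerSeries k, (X : PowerSeries k) ^ c * f ∈ R)
    (f : R) (hford : (2 * c : ℕ) ≤ (f : PowerSeries k).order) :
    f ∈ (mIdeal R) ^ 2 := by
  by_cases hf0 : f = 0
  · simp [hf0]
  have hdvd : (X : PowerSeries k) ^ (2 * c) ∣ (f : PowerSeries k) := by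
    rw [X_pow_dvd_iff]
    intro m hm
    exact PowerSeries.coeff_of_lt_order m (lt_of_lt_of_le (by exact_mod_cast hm) hford)
  obtain ⟨h, hh⟩ := hdvd
  have hXc : (X : PowerSeries k) ^ c ∈ R := by
    have := hcond 1; rwa [mul_one] at this
  have hXc0 : constantCoeff ((X : PowerSeries k) ^ c) = 0 := by
    rw [map_pow, constantCoeff_X, zero_pow (by omega)]
  have hg2 : (X : PowerSeries k) ^ c * h ∈ R := hcond h
  have hfactor : f = (⟨(X : PowerSeries k) ^ c, hXc⟩ : R) * ⟨(X : PowerSeries k) ^ c * h, hg2⟩ := by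
    refine Subtype.ext ?_
    push_cast
    rw [hh, two_mul, pow_add, mul_assoc]
  rw [hfactor, sq]
  refine Ideal.mul_mem_mul ?_ ?_
  · rw [mem_mIdeal_iff]; exact hXc0
  · rw [mem_mIdeal_iff]; simp [hXc0]

lemma key_lemma_s13 {k : Type*} [Field k] {R : Subalgebra k (PowerSeries k)} {c : ℕ}
    (hc1 : 1 ≤ c) (hcond : ∀ f : PowerSeries k, (X : PowerSeries k) ^ c * f ∈ R)
    {aₙ : ℕ} (han : IsGreatest (vset (mIdeal R) \ vset ((mIdeal R) ^ 2)) aₙ)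
    (f : R) (hf : f ∈ mIdeal R) (hford : (aₙ : ℕ∞) < (f : PowerSeries k).order) :
    f ∈ (mIdeal R) ^ 2 := by
  suffices H : ∀ d : ℕ, ∀ f : R, f ∈ mIdeal R → (aₙ : ℕ∞) < (f : PowerSeries k).order →
      (2 * c : ℕ) ≤ d + (f : PowerSeries k).order → f ∈ (mIdeal R) ^ 2 by
    exact H (2 * c) f hf hford le_self_add
  intro d
  induction d with
  | zero =>
    intro f hf hford h2c
    exact base_case hc1 hcond f (by simpa using h2c)
  | succ d ih =>
    intro f hf hford h2c
    by_cases hbig : (2 * c : ℕ) ≤ (f : PowerSeries k).order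
    · exact base_case hc1 hcond f hbig
    push_neg at hbig
    -- order is a natural number m with aₙ < m < 2c
    obtain ⟨m, hm⟩ : ∃ m : ℕ, (f : PowerSeries k).order = (m : ℕ∞) := by
      cases ho : (f : PowerSeries k).order with
      | top => rw [ho] at hbig; exact absurd hbig (by simp)
      | coe m => exact ⟨m, rfl⟩
    have hmv : m ∈ vset (mIdeal R) := ⟨f, hf, hm⟩
    have haₙm : aₙ < m := by rw [hm] at hford; exact_mod_cast hford
    have hmv2 : m ∈ vset ((mIdeal R) ^ 2) := by
      by_contra hmem
      exact absurd (han.2 ⟨hmv, hmem⟩) (not_le.2 haₙm)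
    obtain ⟨g, hg, hgm⟩ := hmv2
    have hgcoeff : PowerSeries.coeff m (g : PowerSeries k) ≠ 0 :=
      (PowerSeries.order_eq_nat.1 hgm).1
    set a : k := PowerSeries.coeff m (f : PowerSeries k) / PowerSeries.coeff m (g : PowerSeries k)
      with ha
    set f' : R := f - algebraMap k R a * g with hf'
    have hg𝔪 : g ∈ mIdeal R := (Ideal.pow_le_self (by norm_num)) hg
    have hag : algebraMap k R a * g ∈ (mIdeal R) ^ 2 := Ideal.mul_mem_left _ _ hg
    have hf'𝔪 : f' ∈ mIdeal R := Ideal.sub_mem _ hf (Ideal.mul_mem_left _ _ hg𝔪)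
    have hf'val : (f' : PowerSeries k)
        = (f : PowerSeries k) - PowerSeries.C a * (g : PowerSeries k) := by
      rw [hf']
      push_cast
      rfl
    have hf'ord : ((m + 1 : ℕ) : ℕ∞) ≤ (f' : PowerSeries k).order := by
      rw [hf'val]
      apply PowerSeries.nat_le_order
      intro i hi
      rcases lt_or_eq_of_le (Nat.lt_succ_iff.1 hi) with hilt | hieq
      · rw [map_sub, PowerSeries.coeff_of_lt_order i (by rw [hm]; exact_mod_cast hilt),
          PowerSeries.coeff_C_mul, PowerSeries.coeff_of_lt_order i (by rw [hgm]; exact_mod_cast hilt)]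
        simp
      · subst hieq
        rw [map_sub, PowerSeries.coeff_C_mul, ha, div_mul_cancel₀ _ hgcoeff, sub_self]
    have hmem' : f' ∈ (mIdeal R) ^ 2 := by
      apply ih f' hf'𝔪
      · exact lt_of_lt_of_le (by exact_mod_cast Nat.lt_succ_of_lt haₙm) hf'ord
      · refine le_trans ?_ (add_le_add_right hf'ord (d : ℕ∞))
        rw [hm] at h2c
        have h2c' : (2 * c : ℕ) ≤ (d + 1) + m := by exact_mod_cast h2c
        have : (2 * c : ℕ) ≤ d + (m + 1) := by omega
        exact_mod_cast this
    have : f = f' + algebraMap k R a * g := by rw [hf']; ring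
    rw [this]
    exact Ideal.add_mem _ hmem' hag

/-- if `y₁,…,y_n` generate `𝔪` and `zᵢ ∈ R` agree with `yᵢ` modulo
`t^{a_n+1}·k[[t]]` (where `a_n = max(v(𝔪)\v(𝔪²))`), then `z₁,…,z_n` also generate `𝔪`. -/
theorem generators_stable_under_high_order_change {k : Type*} [Field k]
    (R : Subalgebra k (PowerSeries k)) (c : ℕ) (hc1 : 1 ≤ c)
    (hcond : ∀ f : PowerSeries k, (X : PowerSeries k) ^ c * f ∈ R)
    (aₙ : ℕ) (han : IsGreatest (vset (mIdeal R) \ vset ((mIdeal R) ^ 2)) aₙ)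
    (n : ℕ) (y : Fin n → R) (hy : Ideal.span (Set.range y) = mIdeal R)
    (z : Fin n → R)
    (hclose : ∀ i, ∃ f : PowerSeries k,
      (y i : PowerSeries k) - (z i : PowerSeries k) = (X : PowerSeries k) ^ (aₙ + 1) * f) :
    Ideal.span (Set.range z) = mIdeal R := by
  have hy𝔪 : ∀ i, y i ∈ mIdeal R := fun i => hy ▸ Ideal.subset_span ⟨i, rfl⟩
  have hz𝔪 : ∀ i, z i ∈ mIdeal R := by
    intro i
    obtain ⟨f, hf⟩ := hclose i
    rw [mem_mIdeal_iff]
    have h1 : constantCoeff ((y i : PowerSeries k) - (z i : PowerSeries k)) = 0 := by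
      rw [hf, map_mul, map_pow, constantCoeff_X, zero_pow (by omega), zero_mul]
    have h2 := (mem_mIdeal_iff (y i)).1 (hy𝔪 i)
    rw [map_sub, h2, zero_sub, neg_eq_zero] at h1
    exact h1
  have hdiff : ∀ i, y i - z i ∈ (mIdeal R) ^ 2 := by
    intro i
    obtain ⟨f, hf⟩ := hclose i
    have hmem : y i - z i ∈ mIdeal R := Ideal.sub_mem _ (hy𝔪 i) (hz𝔪 i)
    apply key_lemma_s13 hc1 hcond han _ hmem
    have hval : ((y i - z i : R) : PowerSeries k)
        = (X : PowerSeries k) ^ (aₙ + 1) * f := by push_cast; exact hf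
    have hord : ((aₙ + 1 : ℕ) : ℕ∞) ≤ ((y i - z i : R) : PowerSeries k).order := by
      apply PowerSeries.nat_le_order
      intro j hj
      have : (X : PowerSeries k) ^ (aₙ + 1) ∣ ((y i - z i : R) : PowerSeries k) :=
        ⟨f, hval⟩
      exact (X_pow_dvd_iff.1 this) j hj
    exact lt_of_lt_of_le (by exact_mod_cast Nat.lt_succ_self aₙ) hord
  -- Nakayama
  have hfg : (mIdeal R).FG := by
    rw [← hy]
    exact Submodule.fg_span (Set.finite_range y)
  have hsup : mIdeal R ≤ Ideal.span (Set.range z) ⊔ (mIdeal R) • (mIdeal R) := by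
    set T := Ideal.span (Set.range z) ⊔ (mIdeal R) • (mIdeal R) with hT
    rw [← hy, Ideal.span_le]
    rintro _ ⟨i, rfl⟩
    have : y i = z i + (y i - z i) := by rw [add_sub_cancel]
    rw [this]
    refine Submodule.add_mem _ (Submodule.mem_sup_left (Ideal.subset_span ⟨i, rfl⟩)) ?_
    refine Submodule.mem_sup_right ?_
    rw [Ideal.smul_eq_mul, ← sq]
    exact hdiff i
  have hle : mIdeal R ≤ Ideal.span (Set.range z) :=
    Submodule.le_of_le_smul_of_le_jacobson_bot hfg (mIdeal_le_jacobson hc1 hcond) hsup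
  refine le_antisymm ?_ hle
  rw [Ideal.span_le]
  rintro _ ⟨i, rfl⟩
  exact hz𝔪 i
end

section
/- The ring R' = k[[t⁵, t⁷, t¹²]] ⊆ k[[t]] (the closure of the k-algebra generated by t⁵, t⁷, t¹²) is strictly contained in R = k[[t⁵, t⁷, t¹² + t²³]]; specifically, t¹² + t²³ ∉ R', since the value semigroup of R' is generated by 5 and 7 and 23 ∉ ⟨5,7⟩. -/
open PowerSeries

lemma mem2375 : (23 : ℕ) ∉ AddSubmonoid.closure ({5,7} : Set ℕ) := by
  rw [AddSubmonoid.mem_closure_pair]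
  rintro ⟨a, b, h⟩
  simp only [smul_eq_mul] at h
  omega

lemma coeff_adjoin_zero {k : Type*} [Field k] (p : PowerSeries k)
    (hp : p ∈ Algebra.adjoin k
      ({(X : PowerSeries k) ^ 5, (X : PowerSeries k) ^ 7, (X : PowerSeries k) ^ 12} :
        Set (PowerSeries k))) :
    ∀ n ∉ AddSubmonoid.closure ({5,7} : Set ℕ), (coeff n) p = 0 := by
  induction hp using Algebra.adjoin_induction with
  | mem x hx =>
    intro n hn
    have h5 : (5:ℕ) ∈ AddSubmonoid.closure ({5,7} : Set ℕ) :=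
      AddSubmonoid.subset_closure (by simp)
    have h7 : (7:ℕ) ∈ AddSubmonoid.closure ({5,7} : Set ℕ) :=
      AddSubmonoid.subset_closure (by simp)
    have h12 : (12:ℕ) ∈ AddSubmonoid.closure ({5,7} : Set ℕ) := by
      have := add_mem h5 h7; norm_num at this ⊢; exact this
    rcases hx with rfl | rfl | rfl <;>
      rw [coeff_X_pow] <;> rw [if_neg (by rintro rfl; tauto)]
  | algebraMap r =>
    intro n hn
    have h0 : n ≠ 0 := by rintro rfl; exact hn (zero_mem _)
    simp [PowerSeries.algebraMap_apply, coeff_C, h0]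
  | add x y _ _ hx hy => intro n hn; simp [map_add, hx n hn, hy n hn]
  | mul x y _ _ hx hy =>
    intro n hn
    rw [coeff_mul]
    apply Finset.sum_eq_zero
    rintro ⟨i, j⟩ hij
    rw [Finset.HasAntidiagonal.mem_antidiagonal] at hij
    by_cases hi : i ∈ AddSubmonoid.closure ({5,7} : Set ℕ)
    · by_cases hj : j ∈ AddSubmonoid.closure ({5,7} : Set ℕ)
      · exact absurd (hij ▸ add_mem hi hj) hn
      · simp [hy j hj]
    · simp [hx i hi]

set_option maxHeartbeats 1000000 in
/-- the ring `R' = k[[t⁵,t⁷,t¹²]]` (the `t`-adic closure of the `k`-algebra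
generated by `t⁵, t⁷, t¹²`, i.e. the image of a power series ring in three variables) is
strictly contained in `R = k[[t⁵,t⁷,t¹²+t²³]]`; specifically `t¹²+t²³ ∈ R` but
`t¹²+t²³ ∉ R'`, since `23 ∉ ⟨5,7⟩`. -/
theorem truncation_can_shrink_ring {k : Type*} [Field k]
    (R' R : Set (PowerSeries k))
    (hR' : ∀ g : PowerSeries k, g ∈ R' ↔ ∀ d : ℕ, ∃ p ∈ Algebra.adjoin k
        ({(X : PowerSeries k) ^ 5, (X : PowerSeries k) ^ 7, (X : PowerSeries k) ^ 12} :
          Set (PowerSeries k)),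
        (d : ℕ∞) < (g - p).order)
    (hR : ∀ g : PowerSeries k, g ∈ R ↔ ∀ d : ℕ, ∃ p ∈ Algebra.adjoin k
        ({(X : PowerSeries k) ^ 5, (X : PowerSeries k) ^ 7,
          (X : PowerSeries k) ^ 12 + (X : PowerSeries k) ^ 23} : Set (PowerSeries k)),
        (d : ℕ∞) < (g - p).order) :
    R' ⊆ R ∧ ((X : PowerSeries k) ^ 12 + (X : PowerSeries k) ^ 23) ∈ R ∧
      ((X : PowerSeries k) ^ 12 + (X : PowerSeries k) ^ 23) ∉ R' := by
  have hsub : Algebra.adjoin k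
      ({(X : PowerSeries k) ^ 5, (X : PowerSeries k) ^ 7, (X : PowerSeries k) ^ 12} :
        Set (PowerSeries k)) ≤ Algebra.adjoin k
      ({(X : PowerSeries k) ^ 5, (X : PowerSeries k) ^ 7,
        (X : PowerSeries k) ^ 12 + (X : PowerSeries k) ^ 23} : Set (PowerSeries k)) := by
    apply Algebra.adjoin_le
    rintro x (rfl | rfl | rfl)
    · exact Algebra.subset_adjoin (by simp)
    · exact Algebra.subset_adjoin (by simp)
    · have h5 : (X : PowerSeries k) ^ 5 ∈ Algebra.adjoin k
          ({(X : PowerSeries k) ^ 5, (X : PowerSeries k) ^ 7,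
            (X : PowerSeries k) ^ 12 + (X : PowerSeries k) ^ 23} : Set (PowerSeries k)) :=
        Algebra.subset_adjoin (by simp)
      have h7 : (X : PowerSeries k) ^ 7 ∈ Algebra.adjoin k
          ({(X : PowerSeries k) ^ 5, (X : PowerSeries k) ^ 7,
            (X : PowerSeries k) ^ 12 + (X : PowerSeries k) ^ 23} : Set (PowerSeries k)) :=
        Algebra.subset_adjoin (by simp)
      have h57 : (X : PowerSeries k) ^ 5 * (X : PowerSeries k) ^ 7
          = (X : PowerSeries k) ^ 12 := by
        rw [← pow_add]
      set S2 : Set (PowerSeries k) := {(X : PowerSeries k) ^ 5, (X : PowerSeries k) ^ 7,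
        (X : PowerSeries k) ^ 12 + (X : PowerSeries k) ^ 23} with hS2
      rw [← h57]
      exact mul_mem h5 h7
  refine ⟨?_, ?_, ?_⟩
  · intro g hg
    rw [hR' g] at hg
    rw [hR g]
    intro d
    obtain ⟨p, hp, hd⟩ := hg d
    exact ⟨p, hsub hp, hd⟩
  · rw [hR]
    intro d
    refine ⟨(X : PowerSeries k) ^ 12 + (X : PowerSeries k) ^ 23,
      Algebra.subset_adjoin (by simp), ?_⟩
    rw [sub_self, PowerSeries.order_zero]
    exact WithTop.coe_lt_top d
  · intro hmem
    rw [hR'] at hmem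
    obtain ⟨p, hp, hd⟩ := hmem 23
    have hc : (coeff 23) (((X : PowerSeries k) ^ 12 + (X : PowerSeries k) ^ 23) - p) = 0 :=
      PowerSeries.coeff_of_lt_order 23 hd
    have hp23 : (coeff 23) p = 0 := coeff_adjoin_zero p hp 23 mem2375
    rw [map_sub, map_add, hp23, coeff_X_pow, coeff_X_pow] at hc
    norm_num at hc
end
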